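/- arXiv:1106.4387 — 7 statements merged into one kernel-verified Lean document; each statement's English description precedes it below -/
import Mathlib

section
/- Let m > 1, b = (Σ k² p_k − m)/(m(m−1)), and for α < 0 set C_α = b/(1−e^α) + (1−b)/(1−e^α m⁻¹). Then lim_{α↗0} (m C_α⁻¹ e^{−α})/|α| = m²(m−1)/(Σ k² p_k − m). -/
open Filter

/-- With `b = (Σ k² p_k − m)/(m(m−1))` and `C_α = b/(1−e^α) + (1−b)/(1−e^α m⁻¹)` for `α < 0`,
one has `lim_{α↗0} (m C_α⁻¹ e^{−α})/|α| = m²(m−1)/(Σ k² p_k − m)`. -/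
theorem stmt2 (p : ℕ → ℝ) (hp : ∀ k, 0 ≤ p k) (hp0 : p 0 = 0)
    (hpsum : HasSum p 1)
    (hp2 : Summable (fun k : ℕ => (k : ℝ) ^ 2 * p k))
    (m S2 : ℝ) (hm : m = ∑' k : ℕ, (k : ℝ) * p k) (hm1 : 1 < m)
    (hS2 : S2 = ∑' k : ℕ, (k : ℝ) ^ 2 * p k)
    (b : ℝ) (hb : b = (S2 - m) / (m * (m - 1)))
    (C : ℝ → ℝ)
    (hC : ∀ α < (0 : ℝ), C α = b / (1 - Real.exp α) + (1 - b) / (1 - Real.exp α * m⁻¹)) :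
    Tendsto (fun α : ℝ => m * (C α)⁻¹ * Real.exp (-α) / |α|)
      (nhdsWithin 0 (Set.Iio 0)) (nhds (m ^ 2 * (m - 1) / (S2 - m))) := by
  have hksq : ∀ k : ℕ, (k : ℝ) ≤ (k : ℝ) ^ 2 := by
    intro k
    exact_mod_cast Nat.le_self_pow two_ne_zero k
  -- summability of k * p k
  have hf1 : Summable (fun k : ℕ => (k : ℝ) * p k) := by
    exact Summable.of_nonneg_of_le (fun k => mul_nonneg (Nat.cast_nonneg k) (hp k))
      (fun k => mul_le_mul_of_nonneg_right (hksq k) (hp k)) hp2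
  -- S2 - m > 0
  have hSm : 0 < S2 - m := by
    by_contra h
    push_neg at h
    set f2 : ℕ → ℝ := fun k => ((k : ℝ) ^ 2 - k) * p k with hf2def
    have hf2sum : Summable f2 := by
      have h' := hp2.sub hf1
      refine h'.congr fun k => ?_
      simp [hf2def]; ring
    have hf2nonneg : ∀ k, 0 ≤ f2 k := fun k =>
      mul_nonneg (by linarith [hksq k]) (hp k)
    have htsum : ∑' k, f2 k = S2 - m := by
      rw [hS2, hm, ← Summable.tsum_sub hp2 hf1]
      exact tsum_congr fun k => by simp [hf2def]; ring
    -- each f2 k = 0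
    have hzero : ∀ k, f2 k = 0 := by
      intro k
      have h1 : f2 k ≤ ∑' j, f2 j := Summable.le_tsum hf2sum k fun j _ => hf2nonneg j
      have := hf2nonneg k
      rw [htsum] at h1
      linarith
    -- so p k = 0 for k ≥ 2, hence m ≤ 1
    have hple : ∀ k : ℕ, (k : ℝ) * p k ≤ p k := by
      intro k
      match k with
      | 0 => simp [hp0]
      | 1 => simp
      | (n+2) =>
        have hz := hzero (n + 2)
        have hne : ((n + 2 : ℕ) : ℝ) ^ 2 - ((n + 2 : ℕ) : ℝ) ≠ 0 := by
          have : (2 : ℝ) ≤ ((n + 2 : ℕ) : ℝ) := by exact_mod_cast Nat.le_add_left 2 n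
          nlinarith
        have hpz : p (n + 2) = 0 := by
          rcases mul_eq_zero.mp hz with h' | h'
          · exact absurd h' hne
          · exact h'
        simp [hpz]
    have : m ≤ 1 := by
      rw [hm, ← hpsum.tsum_eq]
      exact Summable.tsum_le_tsum hple hf1 hpsum.summable
    linarith
  have hm0 : m ≠ 0 := by linarith
  have hbpos : 0 < b := by
    rw [hb]
    apply div_pos hSm
    nlinarith
  -- limit of |α|/(1 - exp α) is 1 as α → 0⁻
  have hslope : Tendsto (fun α : ℝ => (Real.exp α - 1) / α) (nhdsWithin 0 {(0:ℝ)}ᶜ)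
      (nhds 1) := by
    have h := Real.hasDerivAt_exp 0
    rw [hasDerivAt_iff_tendsto_slope] at h
    have he : (fun α : ℝ => (Real.exp α - 1) / α) = slope Real.exp 0 := by
      funext α; simp [slope_def_field, Real.exp_zero]
    rw [he]; simpa [Real.exp_zero] using h
  have h1 : Tendsto (fun α : ℝ => |α| / (1 - Real.exp α)) (nhdsWithin 0 (Set.Iio 0))
      (nhds 1) := by
    have h := (hslope.mono_left
      (nhdsWithin_mono 0 (fun x hx => by
        simp only [Set.mem_compl_iff, Set.mem_singleton_iff]
        exact ne_of_lt hx))).inv₀ one_ne_zero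
    rw [inv_one] at h
    refine h.congr' ?_
    filter_upwards [self_mem_nhdsWithin] with α (hα : α < 0)
    have h3 : Real.exp α - 1 < 0 := by
      have := Real.exp_lt_one_iff.mpr hα
      linarith
    rw [inv_div, abs_of_neg hα,
      div_eq_div_iff (ne_of_lt h3) (by linarith : (1:ℝ) - Real.exp α ≠ 0)]
    ring
  -- limit of |α| * (1-b) / (1 - exp α / m) is 0
  have hden0 : (1 : ℝ) - Real.exp 0 * m⁻¹ ≠ 0 := by
    rw [Real.exp_zero, one_mul]
    have : m⁻¹ < 1 := by
      rw [inv_lt_one_iff₀]; right; exact hm1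
    linarith
  have h2 : Tendsto (fun α : ℝ => |α| * (1 - b) / (1 - Real.exp α * m⁻¹))
      (nhdsWithin 0 (Set.Iio 0)) (nhds 0) := by
    have hnum : Tendsto (fun α : ℝ => |α| * (1 - b)) (nhds (0:ℝ)) (nhds 0) := by
      have : Continuous fun α : ℝ => |α| * (1 - b) := by continuity
      simpa using this.tendsto 0
    have hden : Tendsto (fun α : ℝ => 1 - Real.exp α * m⁻¹) (nhds (0:ℝ))
        (nhds (1 - Real.exp 0 * m⁻¹)) := by
      have : Continuous fun α : ℝ => 1 - Real.exp α * m⁻¹ := by continuity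
      exact this.tendsto 0
    have := (hnum.div hden hden0).mono_left
      (nhdsWithin_le_nhds (s := Set.Iio (0:ℝ)))
    simpa [Pi.div_def] using this
  -- limit of |α| * C α is b
  have hD : Tendsto (fun α : ℝ => |α| * C α) (nhdsWithin 0 (Set.Iio 0)) (nhds b) := by
    have hcomb : Tendsto (fun α : ℝ =>
        b * (|α| / (1 - Real.exp α)) + |α| * (1 - b) / (1 - Real.exp α * m⁻¹))
        (nhdsWithin 0 (Set.Iio 0)) (nhds (b * 1 + 0)) :=
      (h1.const_mul b).add h2
    rw [mul_one, add_zero] at hcomb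
    refine hcomb.congr' ?_
    filter_upwards [self_mem_nhdsWithin] with α (hα : α < 0)
    rw [hC α hα]
    ring
  -- numerator limit
  have hNum : Tendsto (fun α : ℝ => m * Real.exp (-α)) (nhdsWithin 0 (Set.Iio 0))
      (nhds m) := by
    have : Continuous fun α : ℝ => m * Real.exp (-α) := by continuity
    have := (this.tendsto 0).mono_left (nhdsWithin_le_nhds (s := Set.Iio (0:ℝ)))
    simpa using this
  have hfinal := hNum.div hD (ne_of_gt hbpos)
  have hval : m / b = m ^ 2 * (m - 1) / (S2 - m) := by
    rw [hb, div_div_eq_mul_div]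
    congr 1
    ring
  rw [hval] at hfinal
  refine hfinal.congr' ?_
  filter_upwards [self_mem_nhdsWithin] with α (hα : α < 0)
  rw [Pi.div_apply]
  field_simp
end

section
/- Let Z be a nonnegative square-integrable random variable with E[Z] > 0 and E[Z/(1+Z)] > 0. Writing {X} := X/E[X] for a nonnegative integrable X with positive mean, we have E[{Z/(1+Z)}²] ≤ E[{Z}²]. -/
open MeasureTheory

/-- Chebyshev-type integral inequality with weight. -/
lemma cheb_aux {Ω : Type*} [MeasurableSpace Ω] (μ : Measure Ω) [IsProbabilityMeasure μ]
    (r f g : Ω → ℝ)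
    (hr : Integrable r μ)
    (hrf : Integrable (fun ω => r ω * f ω) μ)
    (hrg : Integrable (fun ω => r ω * g ω) μ)
    (hrfg : Integrable (fun ω => r ω * f ω * g ω) μ)
    (hpt : ∀ x y, 0 ≤ r x * r y * ((f x - f y) * (g y - g x))) :
    (∫ ω, r ω * f ω * g ω ∂μ) * (∫ ω, r ω ∂μ)
      ≤ (∫ ω, r ω * f ω ∂μ) * (∫ ω, r ω * g ω ∂μ) := by
  have hI1 : Integrable (fun p : Ω × Ω => (r p.1 * f p.1) * (r p.2 * g p.2)) (μ.prod μ) :=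
    hrf.mul_prod hrg
  have hI2 : Integrable (fun p : Ω × Ω => (r p.1 * g p.1) * (r p.2 * f p.2)) (μ.prod μ) :=
    hrg.mul_prod hrf
  have hI3 : Integrable (fun p : Ω × Ω => (r p.1 * f p.1 * g p.1) * (r p.2)) (μ.prod μ) :=
    hrfg.mul_prod hr
  have hI4 : Integrable (fun p : Ω × Ω => (r p.1) * (r p.2 * f p.2 * g p.2)) (μ.prod μ) :=
    hr.mul_prod hrfg
  have h12 : Integrable (fun p : Ω × Ω =>
      (r p.1 * f p.1) * (r p.2 * g p.2) + (r p.1 * g p.1) * (r p.2 * f p.2)) (μ.prod μ) :=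
    hI1.add hI2
  have h123 : Integrable (fun p : Ω × Ω =>
      (r p.1 * f p.1) * (r p.2 * g p.2) + (r p.1 * g p.1) * (r p.2 * f p.2)
        - (r p.1 * f p.1 * g p.1) * (r p.2)) (μ.prod μ) := h12.sub hI3
  have hH : 0 ≤ ∫ p : Ω × Ω,
      ((r p.1 * f p.1) * (r p.2 * g p.2) + (r p.1 * g p.1) * (r p.2 * f p.2)
        - (r p.1 * f p.1 * g p.1) * (r p.2) - (r p.1) * (r p.2 * f p.2 * g p.2))
      ∂(μ.prod μ) := by
    refine integral_nonneg fun p => ?_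
    have h := hpt p.1 p.2
    show (0 : ℝ) ≤ _
    nlinarith [h]
  rw [integral_sub h123 hI4, integral_sub h12 hI3, integral_add hI1 hI2,
    integral_prod_mul (fun x => r x * f x) (fun x => r x * g x),
    integral_prod_mul (fun x => r x * g x) (fun x => r x * f x),
    integral_prod_mul (fun x => r x * f x * g x) r,
    integral_prod_mul r (fun x => r x * f x * g x)] at hH
  linarith

/-- Normalized second-moment inequality: for nonnegative square-integrable `Z`,
`E[{Z/(1+Z)}²] ≤ E[{Z}²]` where `{X} = X / E[X]`. -/
theorem stmt3 {Ω : Type*} [MeasurableSpace Ω] (μ : Measure Ω) [IsProbabilityMeasure μ]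
    (Z : Ω → ℝ) (hZnn : ∀ ω, 0 ≤ Z ω) (hZmeas : Measurable Z)
    (hZ2 : MemLp Z 2 μ)
    (hEZ : 0 < ∫ ω, Z ω ∂μ)
    (hEW : 0 < ∫ ω, Z ω / (1 + Z ω) ∂μ) :
    ∫ ω, (Z ω / (1 + Z ω) / (∫ ω', Z ω' / (1 + Z ω') ∂μ)) ^ 2 ∂μ
      ≤ ∫ ω, (Z ω / (∫ ω', Z ω' ∂μ)) ^ 2 ∂μ := by
  have hpos : ∀ ω, (0:ℝ) < 1 + Z ω := fun ω => by have := hZnn ω; linarith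
  have hZint : Integrable Z μ := hZ2.integrable one_le_two
  have hZ2int : Integrable (fun ω => Z ω ^ 2) μ := hZ2.integrable_sq
  set W : Ω → ℝ := fun ω => Z ω / (1 + Z ω) with hWdef
  have hWmeas : Measurable W := hZmeas.div (measurable_const.add hZmeas)
  have hWnn : ∀ ω, 0 ≤ W ω := fun ω => div_nonneg (hZnn ω) (hpos ω).le
  have hWle : ∀ ω, W ω ≤ 1 := fun ω => by
    rw [hWdef]; rw [div_le_one (hpos ω)]; linarith [hZnn ω]
  have hbdd : ∀ (F : Ω → ℝ), Measurable F → (∀ ω, 0 ≤ F ω) → (∀ ω, F ω ≤ 1) →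
      Integrable F μ := by
    intro F hm h0 h1
    refine (integrable_const (1:ℝ)).mono' hm.aestronglyMeasurable ?_
    filter_upwards with ω
    rw [Real.norm_eq_abs, abs_of_nonneg (h0 ω)]; exact h1 ω
  have hgmeas : Measurable (fun ω => 1 / (1 + Z ω)) :=
    measurable_const.div (measurable_const.add hZmeas)
  -- integrability of all the products
  have hZWint : Integrable (fun ω => Z ω * W ω) μ := by
    refine hZint.mono' ((hZmeas.mul hWmeas).aestronglyMeasurable) ?_
    filter_upwards with ω
    rw [Real.norm_eq_abs, abs_of_nonneg (mul_nonneg (hZnn ω) (hWnn ω))]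
    nlinarith [hZnn ω, hWnn ω, hWle ω]
  have hZg : Integrable (fun ω => Z ω * (1 / (1 + Z ω))) μ := by
    refine hbdd _ (hZmeas.mul hgmeas) (fun ω => ?_) (fun ω => ?_)
    · have := hZnn ω; have := hpos ω; positivity
    · rw [mul_one_div, div_le_one (hpos ω)]; linarith [hZnn ω]
  have hZWg : Integrable (fun ω => Z ω * W ω * (1 / (1 + Z ω))) μ := by
    refine hbdd _ ((hZmeas.mul hWmeas).mul hgmeas) (fun ω => ?_) (fun ω => ?_)
    · have := hZnn ω; have := hWnn ω; have := hpos ω; positivity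
    · have h1 := hpos ω
      have heq : Z ω * W ω * (1 / (1 + Z ω)) = W ω * W ω := by
        rw [hWdef]; field_simp
      rw [heq]
      nlinarith [hWnn ω, hWle ω]
  have hZZg : Integrable (fun ω => Z ω * Z ω * (1 / (1 + Z ω))) μ := by
    refine hZint.mono' ((hZmeas.mul hZmeas).mul hgmeas).aestronglyMeasurable ?_
    filter_upwards with ω
    have h1 := hpos ω
    have h0 : 0 ≤ Z ω * Z ω * (1 / (1 + Z ω)) := by have := hZnn ω; positivity
    rw [Real.norm_eq_abs, abs_of_nonneg h0, mul_one_div, div_le_iff₀ h1]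
    nlinarith [hZnn ω]
  have hZZint : Integrable (fun ω => Z ω * Z ω) μ := by
    simpa [pow_two] using hZ2int
  -- step 1 : ∫W² ∫Z ≤ ∫ZW ∫W
  have step1 := cheb_aux μ Z W (fun ω => 1 / (1 + Z ω)) hZint hZWint hZg hZWg ?eq1
  case eq1 =>
    intro x y
    have hx := hpos x; have hy := hpos y
    show 0 ≤ Z x * Z y * ((W x - W y) * (1 / (1 + Z y) - 1 / (1 + Z x)))
    have e : (W x - W y) * (1 / (1 + Z y) - 1 / (1 + Z x))
        = ((Z x - Z y) / ((1 + Z x) * (1 + Z y))) ^ 2 := by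
      rw [hWdef]; field_simp; ring
    rw [e]
    have := hZnn x; have := hZnn y; positivity
  -- step 2 : ∫ZW ∫Z ≤ ∫Z² ∫W
  have step2 := cheb_aux μ Z Z (fun ω => 1 / (1 + Z ω)) hZint hZZint hZg hZZg ?eq2
  case eq2 =>
    intro x y
    have hx := hpos x; have hy := hpos y
    show 0 ≤ Z x * Z y * ((Z x - Z y) * (1 / (1 + Z y) - 1 / (1 + Z x)))
    have e : (Z x - Z y) * (1 / (1 + Z y) - 1 / (1 + Z x))
        = (Z x - Z y) ^ 2 / ((1 + Z x) * (1 + Z y)) := by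
      field_simp; ring
    rw [e]
    have := hZnn x; have := hZnn y; positivity
  -- rewrite the integrands
  have e1 : (∫ ω, Z ω * W ω * (1 / (1 + Z ω)) ∂μ) = ∫ ω, (Z ω / (1 + Z ω)) ^ 2 ∂μ := by
    refine integral_congr_ae (Filter.Eventually.of_forall fun ω => ?_)
    show Z ω * W ω * (1 / (1 + Z ω)) = (Z ω / (1 + Z ω)) ^ 2
    have := hpos ω
    rw [hWdef]; field_simp
  have e2 : (∫ ω, Z ω * (1 / (1 + Z ω)) ∂μ) = ∫ ω, Z ω / (1 + Z ω) ∂μ := by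
    refine integral_congr_ae (Filter.Eventually.of_forall fun ω => ?_)
    show Z ω * (1 / (1 + Z ω)) = Z ω / (1 + Z ω)
    rw [mul_one_div]
  have e3 : (∫ ω, Z ω * Z ω * (1 / (1 + Z ω)) ∂μ) = ∫ ω, Z ω * W ω ∂μ := by
    refine integral_congr_ae (Filter.Eventually.of_forall fun ω => ?_)
    show Z ω * Z ω * (1 / (1 + Z ω)) = Z ω * W ω
    rw [hWdef, mul_one_div]
    ring
  have e5 : (∫ ω, Z ω * Z ω ∂μ) = ∫ ω, Z ω ^ 2 ∂μ := by
    refine integral_congr_ae (Filter.Eventually.of_forall fun ω => ?_)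
    show Z ω * Z ω = Z ω ^ 2
    ring
  rw [e1, e2] at step1
  rw [e3, e2, e5] at step2
  -- final algebra
  set ez := ∫ ω, Z ω ∂μ with hez
  set ew := ∫ ω, Z ω / (1 + Z ω) ∂μ with hew
  set w2 := ∫ ω, (Z ω / (1 + Z ω)) ^ 2 ∂μ with hw2
  set z2 := ∫ ω, Z ω ^ 2 ∂μ with hz2
  set zw := ∫ ω, Z ω * W ω ∂μ with hzw
  have goal_eq1 : (∫ ω, (Z ω / (1 + Z ω) / ew) ^ 2 ∂μ) = w2 / ew ^ 2 := by
    rw [show (fun ω => (Z ω / (1 + Z ω) / ew) ^ 2)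
        = fun ω => (Z ω / (1 + Z ω)) ^ 2 / ew ^ 2 from funext fun ω => div_pow _ _ 2,
      integral_div, hw2]
  have goal_eq2 : (∫ ω, (Z ω / ez) ^ 2 ∂μ) = z2 / ez ^ 2 := by
    rw [show (fun ω => (Z ω / ez) ^ 2)
        = fun ω => Z ω ^ 2 / ez ^ 2 from funext fun ω => div_pow _ _ 2,
      integral_div, hz2]
  rw [goal_eq1, goal_eq2]
  rw [div_le_div_iff₀ (by positivity) (by positivity)]
  nlinarith [step1, step2, hEZ, hEW]
end

section
/- Let B be a nonnegative square-integrable random variable with E[B] > 0 satisfying E[B] = e^α E[B/(1+B)] for some α > 0, and suppose E[B²] ≤ K (E[B])² for a constant K > 0. Then E[B] ≥ (1 − e^{−α})/K and E[B] ≤ e^α − 1. -/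
open MeasureTheory

/-- A priori bounds on `E[B]` for the escape-probability fixed point:
if `E[B] = e^α E[B/(1+B)]` and `E[B²] ≤ K (E[B])²`, then
`E[B] ≥ (1 − e^{−α})/K` and `E[B] ≤ e^α − 1`. -/
theorem stmt4 {Ω : Type*} [MeasurableSpace Ω] (μ : Measure Ω) [IsProbabilityMeasure μ]
    (B : Ω → ℝ) (hBnn : ∀ ω, 0 ≤ B ω) (hBmeas : Measurable B)
    (hB2 : MemLp B 2 μ)
    (α K : ℝ) (hα : 0 < α) (hK : 0 < K)
    (hEB : 0 < ∫ ω, B ω ∂μ)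
    (hfix : ∫ ω, B ω ∂μ = Real.exp α * ∫ ω, B ω / (1 + B ω) ∂μ)
    (hK2 : ∫ ω, (B ω) ^ 2 ∂μ ≤ K * (∫ ω, B ω ∂μ) ^ 2) :
    (1 - Real.exp (-α)) / K ≤ ∫ ω, B ω ∂μ ∧ ∫ ω, B ω ∂μ ≤ Real.exp α - 1 := by
  set m := ∫ ω, B ω ∂μ with hm
  have hBint : Integrable B μ := hB2.integrable (by norm_num)
  have hB2int : Integrable (fun ω => (B ω) ^ 2) μ := by
    simpa [pow_two] using hB2.integrable_sq
  have hpos : ∀ ω, (0:ℝ) < 1 + B ω := fun ω => by linarith [hBnn ω]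
  have h2 : (0:ℝ) < 1 + m := by linarith
  have hquot : Integrable (fun ω => B ω / (1 + B ω)) μ := by
    apply hBint.mono ((hBmeas.div (measurable_const.add hBmeas)).aestronglyMeasurable)
    refine Filter.Eventually.of_forall fun ω => ?_
    show ‖B ω / (1 + B ω)‖ ≤ ‖B ω‖
    rw [Real.norm_eq_abs, Real.norm_eq_abs,
      abs_of_nonneg (div_nonneg (hBnn ω) (hpos ω).le), abs_of_nonneg (hBnn ω)]
    exact div_le_self (hBnn ω) (by linarith [hBnn ω])
  have hsq : Integrable (fun ω => (B ω) ^ 2 / (1 + B ω)) μ := by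
    apply hB2int.mono (((hBmeas.pow_const 2).div (measurable_const.add hBmeas)).aestronglyMeasurable)
    refine Filter.Eventually.of_forall fun ω => ?_
    show ‖B ω ^ 2 / (1 + B ω)‖ ≤ ‖B ω ^ 2‖
    rw [Real.norm_eq_abs, Real.norm_eq_abs,
      abs_of_nonneg (div_nonneg (sq_nonneg _) (hpos ω).le), abs_of_nonneg (sq_nonneg _)]
    exact div_le_self (sq_nonneg _) (by linarith [hBnn ω])
  have hid : ∀ ω, B ω / (1 + B ω) = B ω - (B ω) ^ 2 / (1 + B ω) := fun ω => by
    field_simp [(hpos ω).ne']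
    ring
  have hI : ∫ ω, B ω / (1 + B ω) ∂μ = m - ∫ ω, (B ω) ^ 2 / (1 + B ω) ∂μ := by
    simp_rw [hid]
    rw [integral_sub hBint hsq]
  set J := ∫ ω, (B ω) ^ 2 / (1 + B ω) ∂μ with hJdef
  have hEe : Real.exp (-α) * Real.exp α = 1 := by
    rw [← Real.exp_add]; simp
  have hfix' : m = Real.exp α * (m - J) := by rw [← hI]; exact hfix
  have hJ : J = (1 - Real.exp (-α)) * m := by
    have : Real.exp (-α) * m = Real.exp (-α) * Real.exp α * (m - J) := by
      rw [mul_assoc, ← hfix']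
    rw [hEe, one_mul] at this
    linarith
  -- lower bound
  have hJle : J ≤ ∫ ω, (B ω) ^ 2 ∂μ := by
    refine integral_mono hsq hB2int fun ω => ?_
    exact div_le_self (sq_nonneg _) (by linarith [hBnn ω])
  have hlow : (1 - Real.exp (-α)) / K ≤ m := by
    rw [div_le_iff₀ hK]
    nlinarith [hJ, hJle, hK2, hEB]
  refine ⟨hlow, ?_⟩
  -- upper bound via tangent line at m
  have htang : ∀ ω, B ω / (1 + B ω) ≤ m / (1 + m) + (B ω - m) / (1 + m) ^ 2 := by
    intro ω
    have key : (m / (1 + m) + (B ω - m) / (1 + m) ^ 2) - B ω / (1 + B ω)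
        = (B ω - m) ^ 2 / ((1 + m) ^ 2 * (1 + B ω)) := by
      field_simp [h2.ne', (hpos ω).ne']
      ring
    have hnn : 0 ≤ (B ω - m) ^ 2 / ((1 + m) ^ 2 * (1 + B ω)) :=
      div_nonneg (sq_nonneg _) (mul_pos (pow_pos h2 2) (hpos ω)).le
    linarith [key, hnn]
  have hRHSint : Integrable (fun ω => m / (1 + m) + (B ω - m) / (1 + m) ^ 2) μ :=
    (integrable_const _).add ((hBint.sub (integrable_const m)).div_const _)
  have hIle : ∫ ω, B ω / (1 + B ω) ∂μ ≤ m / (1 + m) := by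
    calc ∫ ω, B ω / (1 + B ω) ∂μ
        ≤ ∫ ω, (m / (1 + m) + (B ω - m) / (1 + m) ^ 2) ∂μ :=
          integral_mono hquot hRHSint htang
      _ = m / (1 + m) := by
          have i1 : Integrable (fun ω => (B ω - m) / (1 + m) ^ 2) μ :=
            ((hBint.sub (integrable_const m)).div_const _)
          have i0 : ∫ ω, (B ω - m) / (1 + m) ^ 2 ∂μ = 0 := by
            rw [integral_div, integral_sub hBint (integrable_const m), integral_const]
            simp
            exact Or.inl (sub_eq_zero.mpr hm.symm)
          rw [integral_add (integrable_const _) i1, i0, integral_const]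
          simp
  have hup : m ≤ Real.exp α * (m / (1 + m)) :=
    hfix.trans_le (mul_le_mul_of_nonneg_left hIle (Real.exp_pos α).le)
  rw [← mul_div_assoc, le_div_iff₀ h2] at hup
  nlinarith [hup, hEB]
end

section
/- With the notation of the IGW environment process, let ψ_α(T) = C_α⁻¹ Σ_{j=0}^∞ e^{jα} W_{-j}(T) for α < 0, and let D f(T) = f(τ⁻¹T) − f(T) be the shift toward the ancestor. Then D ψ_α = (e^{−α} − 1) ψ_α − C_α⁻¹ e^{−α} W_o. -/
/-- Key identity for the stationary density of the environment process:
with `ψ_α(T) = C_α⁻¹ Σ_{j≥0} e^{jα} W_{-j}(T)` and `D f(T) = f(τ⁻¹T) − f(T)`,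
one has `D ψ_α = (e^{−α} − 1) ψ_α − C_α⁻¹ e^{−α} W_o`. -/
theorem stmt9 {T : Type*} (α Cα : ℝ) (hα : α < 0) (hC : Cα ≠ 0)
    (τinv : T → T) (W : ℕ → T → ℝ)
    (hshift : ∀ j t, W j (τinv t) = W (j + 1) t)
    (hsum : ∀ t, Summable (fun j : ℕ => Real.exp (j * α) * W j t))
    (ψ : T → ℝ)
    (hψ : ∀ t, ψ t = Cα⁻¹ * ∑' j : ℕ, Real.exp (j * α) * W j t) :
    ∀ t, ψ (τinv t) - ψ t
      = (Real.exp (-α) - 1) * ψ t - Cα⁻¹ * Real.exp (-α) * W 0 t := by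
  intro t
  have hf := hsum t
  have key : ∀ j : ℕ, Real.exp (j * α) * W j (τinv t)
      = Real.exp (-α) * (Real.exp ((j + 1 : ℕ) * α) * W (j + 1) t) := by
    intro j
    rw [hshift]
    have he : Real.exp (-α) * Real.exp ((j + 1 : ℕ) * α) = Real.exp ((j : ℝ) * α) := by
      rw [← Real.exp_add]
      congr 1
      push_cast
      ring
    rw [← mul_assoc, he]
  have h1 : ψ (τinv t)
      = Cα⁻¹ * (Real.exp (-α) * ∑' j : ℕ, Real.exp ((j + 1 : ℕ) * α) * W (j + 1) t) := by
    rw [hψ]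
    congr 1
    rw [← tsum_mul_left]
    exact tsum_congr key
  have h2 : (∑' j : ℕ, Real.exp ((j + 1 : ℕ) * α) * W (j + 1) t)
      = (∑' j : ℕ, Real.exp (j * α) * W j t) - Real.exp ((0 : ℕ) * α) * W 0 t := by
    have := (Summable.tsum_eq_zero_add hf)
    rw [this]; ring
  rw [h1, h2, hψ t]
  simp only [Nat.cast_zero, zero_mul, Real.exp_zero, one_mul]
  ring
end

section
/- Let n ≥ 2 and let b_{j+1} > 0, a_j ≥ 0 for 0 ≤ j < n. Define z_n = 0 and z_j = 1/(1 + a_j + b_{j+1}(1 − z_{j+1})) for 0 ≤ j ≤ n−1. Let (S_k) be the Markov chain on {0,…,n} with transition probabilities P(S_k = j+1 | S_{k−1} = j) = b_{j+1}/(1+b_{j+1}) and P(S_k = j−1 | S_{k−1} = j) = 1/(1+b_{j+1}), started at S_0 = r with 1 ≤ r < n. Then ∏_{j=1}^r z_j = E_r[ 1{τ_S(0) < τ_S(n)} ∏_{j=1}^{n−1} ((1+b_{j+1})/(1+b_{j+1}+a_j))^{L^j_{τ_S(0)}} ], where τ_S(x) = inf{k ≥ 1 : S_k = x} and L^j_k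 = Σ_{i=0}^{k−1} 1{S_i = j} is the local time at j before time k. -/
open Finset

namespace Stmt10

noncomputable def tr (b : ℕ → ℝ) (x y : ℕ) : ℝ :=
  if y = x + 1 then b (x + 1) / (1 + b (x + 1))
  else if y + 1 = x then 1 / (1 + b (x + 1)) else 0

noncomputable def ratio (a b : ℕ → ℝ) (j : ℕ) : ℝ :=
  (1 + b (j + 1)) / (1 + b (j + 1) + a j)

noncomputable def wt (n : ℕ) (a b : ℕ → ℝ) (k : ℕ) (p : Fin (k + 1) → Fin (n + 1)) : ℝ :=
  (∏ i : Fin k,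
    (if (p i.succ : ℕ) = (p i.castSucc : ℕ) + 1 then
      b ((p i.castSucc : ℕ) + 1) / (1 + b ((p i.castSucc : ℕ) + 1))
    else if (p i.succ : ℕ) + 1 = (p i.castSucc : ℕ) then
      1 / (1 + b ((p i.castSucc : ℕ) + 1))
    else 0)) *
  ∏ j ∈ Finset.Icc 1 (n - 1),
    ((1 + b (j + 1)) / (1 + b (j + 1) + a j)) ^
      (Finset.univ.filter (fun i : Fin k => (p i.castSucc : ℕ) = j)).card

noncomputable def G (n : ℕ) (a b : ℕ → ℝ) (r k : ℕ) : ℝ :=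
  ∑ p : Fin (k + 1) → Fin (n + 1),
    (if (p 0 : ℕ) = r ∧ (p (Fin.last k) : ℕ) = 0 ∧
        (∀ i : Fin (k + 1), 0 < (i : ℕ) → (i : ℕ) < k →
          (p i : ℕ) ≠ 0 ∧ (p i : ℕ) ≠ n) then
      wt n a b k p
    else 0)

noncomputable def E (n : ℕ) (a b : ℕ → ℝ) (x k : ℕ) : ℝ :=
  if x = 0 then (if k = 0 then 1 else 0) else if x = n then 0 else G n a b x k

-- step A helper
lemma sum_cons {X M : Type*} [Fintype X] [AddCommMonoid M] (m : ℕ)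
    (f : (Fin (m + 1) → X) → M) :
    ∑ p : Fin (m + 1) → X, f p = ∑ x : X, ∑ q : Fin m → X, f (Fin.cons x q) := by
  calc ∑ p : Fin (m + 1) → X, f p
      = ∑ y : X × (Fin m → X), f (Fin.cons y.1 y.2) :=
        (Fintype.sum_equiv (Fin.consEquiv fun _ => X) _ _ (fun y => rfl)).symm
    _ = _ := Fintype.sum_prod_type _

-- unconditional weight splitting
lemma wt_cons (n : ℕ) (a b : ℕ → ℝ) (r k : ℕ) (hr : 1 ≤ r) (hrn : r < n)
    (hrn1 : r < n + 1) (q : Fin (k + 1) → Fin (n + 1)) :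
    wt n a b (k + 1) (Fin.cons ⟨r, hrn1⟩ q) =
      tr b r (q 0) * (ratio a b r * wt n a b k q) := by
  have hsteps : (∏ i : Fin (k + 1),
      (if ((Fin.cons ⟨r, hrn1⟩ q : Fin (k + 2) → Fin (n + 1)) i.succ : ℕ) =
          ((Fin.cons ⟨r, hrn1⟩ q : Fin (k + 2) → Fin (n + 1)) i.castSucc : ℕ) + 1 then
        b (((Fin.cons ⟨r, hrn1⟩ q : Fin (k + 2) → Fin (n + 1)) i.castSucc : ℕ) + 1) /
          (1 + b (((Fin.cons ⟨r, hrn1⟩ q : Fin (k + 2) → Fin (n + 1)) i.castSucc : ℕ) + 1))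
      else if ((Fin.cons ⟨r, hrn1⟩ q : Fin (k + 2) → Fin (n + 1)) i.succ : ℕ) + 1 =
          ((Fin.cons ⟨r, hrn1⟩ q : Fin (k + 2) → Fin (n + 1)) i.castSucc : ℕ) then
        1 / (1 + b (((Fin.cons ⟨r, hrn1⟩ q : Fin (k + 2) → Fin (n + 1)) i.castSucc : ℕ) + 1))
      else 0)) =
      tr b r (q 0) *
        ∏ i : Fin k,
          (if (q i.succ : ℕ) = (q i.castSucc : ℕ) + 1 then
            b ((q i.castSucc : ℕ) + 1) / (1 + b ((q i.castSucc : ℕ) + 1))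
          else if (q i.succ : ℕ) + 1 = (q i.castSucc : ℕ) then
            1 / (1 + b ((q i.castSucc : ℕ) + 1))
          else 0) := by
    rw [Fin.prod_univ_succ]
    congr 1
  have hloc : (∏ j ∈ Finset.Icc 1 (n - 1),
      ((1 + b (j + 1)) / (1 + b (j + 1) + a j)) ^
        (Finset.univ.filter
          (fun i : Fin (k + 1) =>
            ((Fin.cons ⟨r, hrn1⟩ q : Fin (k + 2) → Fin (n + 1)) i.castSucc : ℕ) = j)).card) =
      ratio a b r *
        ∏ j ∈ Finset.Icc 1 (n - 1),
          ((1 + b (j + 1)) / (1 + b (j + 1) + a j)) ^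
            (Finset.univ.filter (fun i : Fin k => (q i.castSucc : ℕ) = j)).card := by
    have hcard : ∀ j : ℕ, (Finset.univ.filter
        (fun i : Fin (k + 1) =>
          ((Fin.cons ⟨r, hrn1⟩ q : Fin (k + 2) → Fin (n + 1)) i.castSucc : ℕ) = j)).card =
        (if r = j then 1 else 0) +
          (Finset.univ.filter (fun i : Fin k => (q i.castSucc : ℕ) = j)).card := by
      intro j
      rw [Finset.card_filter, Finset.card_filter, Fin.sum_univ_succ]
      congr 1
    calc (∏ j ∈ Finset.Icc 1 (n - 1),
        ((1 + b (j + 1)) / (1 + b (j + 1) + a j)) ^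
          (Finset.univ.filter
            (fun i : Fin (k + 1) =>
              ((Fin.cons ⟨r, hrn1⟩ q : Fin (k + 2) → Fin (n + 1)) i.castSucc : ℕ) = j)).card)
        = ∏ j ∈ Finset.Icc 1 (n - 1),
            (if r = j then (1 + b (j + 1)) / (1 + b (j + 1) + a j) else 1) *
              ((1 + b (j + 1)) / (1 + b (j + 1) + a j)) ^
                (Finset.univ.filter (fun i : Fin k => (q i.castSucc : ℕ) = j)).card := by
          refine Finset.prod_congr rfl fun j _ => ?_
          rw [hcard j, pow_add]
          congr 1
          split_ifs <;> simp
      _ = _ := by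
          rw [Finset.prod_mul_distrib, Finset.prod_ite_eq]
          have : r ∈ Finset.Icc 1 (n - 1) := by
            rw [Finset.mem_Icc]; omega
          rw [if_pos this, ratio]
  rw [wt, wt, hsteps, hloc]
  ring


lemma cond_cons_iff (n k : ℕ) (P : Fin (n + 1) → Prop) (x : Fin (n + 1))
    (q : Fin (k + 1) → Fin (n + 1)) :
    (∀ i : Fin (k + 2), 0 < (i : ℕ) → (i : ℕ) < k + 1 →
      P ((Fin.cons x q : Fin (k + 2) → Fin (n + 1)) i)) ↔
      (∀ i : Fin (k + 1), (i : ℕ) < k → P (q i)) := by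
  constructor
  · intro h i hi
    have := h i.succ (by simp) (by simpa using Nat.succ_lt_succ hi)
    simpa using this
  · intro h i h0 hik
    obtain ⟨j, rfl⟩ := Fin.exists_succ_eq_of_ne_zero (x := i)
      (by intro hi0; rw [hi0] at h0; simp at h0)
    have hj : (j : ℕ) < k := by
      have : (j.succ : ℕ) = (j : ℕ) + 1 := Fin.val_succ j
      omega
    simpa using h j hj

lemma key (n : ℕ) (a b : ℕ → ℝ) (r k : ℕ) (hr : 1 ≤ r) (hrn : r < n) :
    G n a b r (k + 1) =
      ratio a b r * (tr b r (r + 1) * E n a b (r + 1) k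
        + tr b r (r - 1) * E n a b (r - 1) k) := by
  classical
  have hrn1 : r < n + 1 := by omega
  have hru : r + 1 < n + 1 := by omega
  have hrd : r - 1 < n + 1 := by omega
  set C : (Fin (k + 1) → Fin (n + 1)) → Prop := fun q =>
    (q (Fin.last k) : ℕ) = 0 ∧
      ∀ i : Fin (k + 1), (i : ℕ) < k → (q i : ℕ) ≠ 0 ∧ (q i : ℕ) ≠ n with hC
  set H : Fin (n + 1) → ℝ := fun s =>
    ∑ q : Fin (k + 1) → Fin (n + 1), (if q 0 = s ∧ C q then wt n a b k q else 0) with hH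
  -- Step 1: sum over first coordinate and tail
  have step1 : G n a b r (k + 1) =
      ∑ s : Fin (n + 1), (tr b r (s : ℕ) * ratio a b r) * H s := by
    rw [G, sum_cons]
    have inner : ∀ x : Fin (n + 1), (x : ℕ) = r →
        (∑ q : Fin (k + 1) → Fin (n + 1),
          (if ((Fin.cons x q : Fin (k + 2) → Fin (n + 1)) 0 : ℕ) = r ∧
              ((Fin.cons x q : Fin (k + 2) → Fin (n + 1)) (Fin.last (k + 1)) : ℕ) = 0 ∧
              (∀ i : Fin (k + 2), 0 < (i : ℕ) → (i : ℕ) < k + 1 →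
                ((Fin.cons x q : Fin (k + 2) → Fin (n + 1)) i : ℕ) ≠ 0 ∧
                ((Fin.cons x q : Fin (k + 2) → Fin (n + 1)) i : ℕ) ≠ n) then
            wt n a b (k + 1) (Fin.cons x q)
          else 0)) =
        ∑ s : Fin (n + 1), (tr b r (s : ℕ) * ratio a b r) * H s := by
      intro x hx
      have hxeq : x = ⟨r, hrn1⟩ := Fin.ext hx
      subst hxeq
      have per : ∀ q : Fin (k + 1) → Fin (n + 1),
          (if ((Fin.cons (⟨r, hrn1⟩ : Fin (n+1)) q : Fin (k + 2) → Fin (n + 1)) 0 : ℕ) = r ∧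
              ((Fin.cons (⟨r, hrn1⟩ : Fin (n+1)) q : Fin (k + 2) → Fin (n + 1)) (Fin.last (k + 1)) : ℕ) = 0 ∧
              (∀ i : Fin (k + 2), 0 < (i : ℕ) → (i : ℕ) < k + 1 →
                ((Fin.cons (⟨r, hrn1⟩ : Fin (n+1)) q : Fin (k + 2) → Fin (n + 1)) i : ℕ) ≠ 0 ∧
                ((Fin.cons (⟨r, hrn1⟩ : Fin (n+1)) q : Fin (k + 2) → Fin (n + 1)) i : ℕ) ≠ n) then
            wt n a b (k + 1) (Fin.cons (⟨r, hrn1⟩ : Fin (n+1)) q)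
          else 0) =
          tr b r ((q 0 : ℕ)) * ratio a b r * (if C q then wt n a b k q else 0) := by
        intro q
        have hiff : (((Fin.cons (⟨r, hrn1⟩ : Fin (n+1)) q : Fin (k + 2) → Fin (n + 1)) 0 : ℕ) = r ∧
            ((Fin.cons (⟨r, hrn1⟩ : Fin (n+1)) q : Fin (k + 2) → Fin (n + 1)) (Fin.last (k + 1)) : ℕ) = 0 ∧
            (∀ i : Fin (k + 2), 0 < (i : ℕ) → (i : ℕ) < k + 1 →
              ((Fin.cons (⟨r, hrn1⟩ : Fin (n+1)) q : Fin (k + 2) → Fin (n + 1)) i : ℕ) ≠ 0 ∧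
              ((Fin.cons (⟨r, hrn1⟩ : Fin (n+1)) q : Fin (k + 2) → Fin (n + 1)) i : ℕ) ≠ n)) ↔ C q := by
          rw [hC]
          constructor
          · rintro ⟨-, h2, h3⟩
            refine ⟨by simpa [← Fin.succ_last] using h2, ?_⟩
            exact (cond_cons_iff n k (fun v => (v : ℕ) ≠ 0 ∧ (v : ℕ) ≠ n) _ q).1 h3
          · rintro ⟨h2, h3⟩
            refine ⟨by simp, by simpa [← Fin.succ_last] using h2, ?_⟩
            exact (cond_cons_iff n k (fun v => (v : ℕ) ≠ 0 ∧ (v : ℕ) ≠ n) _ q).2 h3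
        rw [if_congr hiff (wt_cons n a b r k hr hrn hrn1 q) rfl]
        split_ifs with h
        · ring
        · ring
      rw [Finset.sum_congr rfl fun q _ => per q]
      have per2 : ∀ q : Fin (k + 1) → Fin (n + 1),
          tr b r ((q 0 : ℕ)) * ratio a b r * (if C q then wt n a b k q else 0) =
          ∑ s : Fin (n + 1), (if q 0 = s then
            tr b r ((s : ℕ)) * ratio a b r * (if C q then wt n a b k q else 0) else 0) := by
        intro q
        rw [Finset.sum_ite_eq Finset.univ (q 0)
          (fun s => tr b r ((s : ℕ)) * ratio a b r * (if C q then wt n a b k q else 0))]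
        simp
      rw [Finset.sum_congr rfl fun q _ => per2 q, Finset.sum_comm]
      refine Finset.sum_congr rfl fun s _ => ?_
      rw [hH]
      rw [Finset.mul_sum]
      refine Finset.sum_congr rfl fun q _ => ?_
      by_cases h1 : q 0 = s
      · by_cases h2 : C q
        · rw [if_pos h1, if_pos h2, if_pos ⟨h1, h2⟩]
        · rw [if_pos h1, if_neg h2, if_neg (fun hc => h2 hc.2)]
      · rw [if_neg h1, if_neg (fun hc => h1 hc.1)]; ring
    refine Finset.sum_eq_single_of_mem (⟨r, hrn1⟩ : Fin (n + 1)) (Finset.mem_univ _) ?_ |>.trans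
      (inner _ rfl)
    intro x _ hxne
    refine Finset.sum_eq_zero fun q _ => ?_
    rw [if_neg]
    rintro ⟨h1, -⟩
    exact hxne (Fin.ext (by simpa using h1))
  have wt_zero : ∀ q : Fin 1 → Fin (n + 1), wt n a b 0 q = 1 := by
    intro q; simp [wt]
  have Hmid : ∀ s : Fin (n + 1), (s : ℕ) ≠ 0 → (s : ℕ) ≠ n → H s = G n a b (s : ℕ) k := by
    intro s hs0 hsn
    rw [hH, G]
    refine Finset.sum_congr rfl fun q _ => ?_
    refine if_congr ?_ rfl rfl
    rw [hC]
    constructor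
    · rintro ⟨h1, h2, h3⟩
      exact ⟨by rw [h1], h2, fun i _ hik => h3 i hik⟩
    · rintro ⟨h1, h2, h3⟩
      refine ⟨Fin.ext h1, h2, fun i hik => ?_⟩
      rcases Nat.eq_zero_or_pos (i : ℕ) with h0 | h0
      · have hi : i = 0 := Fin.ext h0
        subst hi
        rw [h1]
        exact ⟨hs0, hsn⟩
      · exact h3 i h0 hik
  have Hbot : ∀ s : Fin (n + 1), (s : ℕ) = 0 → H s = (if k = 0 then (1 : ℝ) else 0) := by
    intro s hs
    rcases Nat.eq_zero_or_pos k with rfl | hk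
    · rw [if_pos rfl]
      simp only [hH]
      have : ∀ q : Fin 1 → Fin (n + 1),
          (if q 0 = s ∧ C q then wt n a b 0 q else 0) =
            (if (Equiv.funUnique (Fin 1) (Fin (n + 1))) q = s then (1 : ℝ) else 0) := by
        intro q
        have hdq : (Equiv.funUnique (Fin 1) (Fin (n + 1))) q = q 0 := rfl
        rw [hdq, wt_zero q]
        refine if_congr ?_ rfl rfl
        rw [hC]
        constructor
        · rintro ⟨h1, -⟩; exact h1
        · intro h1
          refine ⟨h1, ?_, fun i hik => absurd hik (by omega)⟩
          show ((q (Fin.last 0) : ℕ)) = 0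
          have : Fin.last 0 = (0 : Fin 1) := rfl
          rw [this, h1, hs]
      rw [Fintype.sum_equiv (Equiv.funUnique (Fin 1) (Fin (n + 1))) _
        (fun v => if v = s then (1 : ℝ) else 0) this]
      rw [Finset.sum_ite_eq' Finset.univ s fun _ => (1 : ℝ)]
      simp
    · rw [if_neg (by omega)]
      simp only [hH]
      refine Finset.sum_eq_zero fun q _ => ?_
      rw [if_neg]
      rintro ⟨h1, -, h3⟩
      have h0 : ((0 : Fin (k + 1)) : ℕ) < k := by simpa using hk
      exact (h3 0 h0).1 (by rw [h1, hs])
  have Htop : ∀ s : Fin (n + 1), (s : ℕ) = n → H s = 0 := by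
    intro s hs
    simp only [hH]
    refine Finset.sum_eq_zero fun q _ => ?_
    rw [if_neg]
    rintro ⟨h1, h2, h3⟩
    rcases Nat.eq_zero_or_pos k with rfl | hk
    · have : (q (Fin.last 0) : ℕ) = n := by
        have h00 : Fin.last 0 = (0 : Fin 1) := rfl
        rw [h00, h1, hs]
      omega
    · have h0 : ((0 : Fin (k + 1)) : ℕ) < k := by simpa using hk
      exact (h3 0 h0).2 (by rw [h1, hs])
  have hsplit : ∑ s : Fin (n + 1), (tr b r (s : ℕ) * ratio a b r) * H s =
      (tr b r (r + 1) * ratio a b r) * H ⟨r + 1, hru⟩ +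
        (tr b r (r - 1) * ratio a b r) * H ⟨r - 1, hrd⟩ := by
    have hne : (⟨r + 1, hru⟩ : Fin (n + 1)) ≠ ⟨r - 1, hrd⟩ := by
      intro h
      have h2 : r + 1 = r - 1 := congrArg Fin.val h
      omega
    have hzero : ∀ x ∈ Finset.univ,
        x ∉ ({⟨r + 1, hru⟩, ⟨r - 1, hrd⟩} : Finset (Fin (n + 1))) →
        (tr b r (x : ℕ) * ratio a b r) * H x = 0 := by
      intro x _ hx
      simp only [Finset.mem_insert, Finset.mem_singleton] at hx
      push_neg at hx
      have h1 : (x : ℕ) ≠ r + 1 := fun h => hx.1 (Fin.ext h)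
      have h2 : ¬((x : ℕ) + 1 = r) := by
        intro h
        exact hx.2 (Fin.ext (show (x : ℕ) = r - 1 by omega))
      rw [tr, if_neg h1, if_neg h2, zero_mul, zero_mul]
    rw [← Finset.sum_subset
      (Finset.subset_univ ({⟨r + 1, hru⟩, ⟨r - 1, hrd⟩} : Finset (Fin (n + 1)))) hzero]
    rw [Finset.sum_insert (by simpa using hne), Finset.sum_singleton]
  have Eup : H ⟨r + 1, hru⟩ = E n a b (r + 1) k := by
    rcases eq_or_lt_of_le (Nat.succ_le_of_lt hrn) with he | hl
    · rw [Htop ⟨r + 1, hru⟩ (show r + 1 = n from he), E, if_neg (by omega), if_pos he]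
    · rw [Hmid ⟨r + 1, hru⟩ (show r + 1 ≠ 0 by omega) (show r + 1 ≠ n by omega), E,
        if_neg (by omega), if_neg (by omega)]
  have Edn : H ⟨r - 1, hrd⟩ = E n a b (r - 1) k := by
    rcases eq_or_lt_of_le hr with he | hl
    · have h0 : r - 1 = 0 := by omega
      rw [Hbot ⟨r - 1, hrd⟩ (show r - 1 = 0 from h0), E, if_pos h0]
    · rw [Hmid ⟨r - 1, hrd⟩ (show r - 1 ≠ 0 by omega) (show r - 1 ≠ n by omega), E,
        if_neg (by omega), if_neg (by omega)]
  rw [step1, hsplit, Eup, Edn]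
  ring

lemma G_zero (n : ℕ) (a b : ℕ → ℝ) (r : ℕ) (hr : 1 ≤ r) : G n a b r 0 = 0 := by
  rw [G]
  refine Finset.sum_eq_zero fun p _ => ?_
  rw [if_neg]
  rintro ⟨h1, h2, -⟩
  have : Fin.last 0 = (0 : Fin 1) := rfl
  rw [this] at h2
  omega

lemma G_nonneg (n : ℕ) (a b : ℕ → ℝ) (r k : ℕ)
    (ha : ∀ j < n, 0 ≤ a j) (hb : ∀ j < n, 0 < b (j + 1))
    (hr : 1 ≤ r) (hrn : r < n) : 0 ≤ G n a b r k := by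
  rw [G]
  refine Finset.sum_nonneg fun p _ => ?_
  split_ifs with hcond
  · obtain ⟨h1, h2, h3⟩ := hcond
    rw [wt]
    apply mul_nonneg
    · refine Finset.prod_nonneg fun i _ => ?_
      have hx : (p i.castSucc : ℕ) < n := by
        rcases Nat.eq_zero_or_pos (i : ℕ) with h0 | h0
        · have : i.castSucc = 0 := Fin.ext (by simpa using h0)
          rw [this, h1]; exact hrn
        · have hv : (i.castSucc : ℕ) = (i : ℕ) := rfl
          have := h3 i.castSucc (by omega) (by
            have : (i : ℕ) < k := i.isLt
            omega)
          have hle : (p i.castSucc : ℕ) < n + 1 := (p i.castSucc).isLt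
          omega
      have hbx : 0 < b ((p i.castSucc : ℕ) + 1) := hb _ hx
      split_ifs
      · positivity
      · positivity
      · exact le_refl 0
    · refine Finset.prod_nonneg fun j hj => ?_
      rw [Finset.mem_Icc] at hj
      have hbj : 0 < b (j + 1) := hb j (by omega)
      have haj : 0 ≤ a j := ha j (by omega)
      positivity
  · exact le_refl 0

lemma tr_up (b : ℕ → ℝ) (r : ℕ) : tr b r (r + 1) = b (r + 1) / (1 + b (r + 1)) := by
  rw [tr, if_pos rfl]

lemma tr_dn (b : ℕ → ℝ) (r : ℕ) (hr : 1 ≤ r) : tr b r (r - 1) = 1 / (1 + b (r + 1)) := by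
  rw [tr, if_neg (by omega), if_pos (by omega)]

lemma E_sum_range (n : ℕ) (a b : ℕ → ℝ) (ha : ∀ j < n, 0 ≤ a j)
    (hb : ∀ j < n, 0 < b (j + 1)) (hn : 1 ≤ n) (K : ℕ)
    (ihK : ∀ r, 1 ≤ r → r < n → ∑ k ∈ Finset.range K, G n a b r k ≤ 1)
    (ihK0 : ∀ r, 1 ≤ r → r < n → 0 ≤ ∑ k ∈ Finset.range K, G n a b r k)
    (x : ℕ) (hx : x ≤ n) :
    0 ≤ ∑ k ∈ Finset.range K, E n a b x k ∧ ∑ k ∈ Finset.range K, E n a b x k ≤ 1 := by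
  rcases Nat.eq_zero_or_pos x with rfl | hx0
  · have hE : ∀ k, E n a b 0 k = if k = 0 then (1 : ℝ) else 0 := fun k => by
      rw [E, if_pos rfl]
    simp only [hE]
    constructor
    · refine Finset.sum_nonneg fun k _ => ?_
      split_ifs <;> norm_num
    · rw [Finset.sum_ite_eq' (Finset.range K) 0 fun _ => (1 : ℝ)]
      split_ifs <;> norm_num
  · rcases eq_or_lt_of_le hx with he | hxn
    · have hE : ∀ k, E n a b x k = 0 := fun k => by
        rw [E, if_neg (by omega), if_pos he]
      simp only [hE]
      simp
    · have hE : ∀ k, E n a b x k = G n a b x k := fun k => by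
        rw [E, if_neg (by omega), if_neg (by omega)]
      simp only [hE]
      exact ⟨ihK0 x hx0 hxn, ihK x hx0 hxn⟩

lemma partial_le (n : ℕ) (a b : ℕ → ℝ) (ha : ∀ j < n, 0 ≤ a j)
    (hb : ∀ j < n, 0 < b (j + 1)) (hn : 1 ≤ n) :
    ∀ K, ∀ r, 1 ≤ r → r < n → ∑ k ∈ Finset.range K, G n a b r k ≤ 1 := by
  intro K
  induction K with
  | zero => intro r _ _; simp
  | succ K ih =>
    intro r hr hrn
    have ih0 : ∀ r', 1 ≤ r' → r' < n → 0 ≤ ∑ k ∈ Finset.range K, G n a b r' k :=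
      fun r' h1 h2 => Finset.sum_nonneg fun k _ => G_nonneg n a b r' k ha hb h1 h2
    rw [Finset.sum_range_succ']
    rw [G_zero n a b r hr, add_zero]
    have hbr : 0 < b (r + 1) := hb r hrn
    have har : 0 ≤ a r := ha r hrn
    calc ∑ k ∈ Finset.range K, G n a b r (k + 1)
        = ∑ k ∈ Finset.range K, ratio a b r *
            (tr b r (r + 1) * E n a b (r + 1) k + tr b r (r - 1) * E n a b (r - 1) k) :=
          Finset.sum_congr rfl fun k _ => key n a b r k hr hrn
      _ = ratio a b r * (tr b r (r + 1) * ∑ k ∈ Finset.range K, E n a b (r + 1) k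
            + tr b r (r - 1) * ∑ k ∈ Finset.range K, E n a b (r - 1) k) := by
          rw [← Finset.mul_sum, Finset.sum_add_distrib, ← Finset.mul_sum, ← Finset.mul_sum]
      _ ≤ ratio a b r * (tr b r (r + 1) * 1 + tr b r (r - 1) * 1) := by
          have hup := E_sum_range n a b ha hb hn K ih ih0 (r + 1) (by omega)
          have hdn := E_sum_range n a b ha hb hn K ih ih0 (r - 1) (by omega)
          have htu : 0 ≤ tr b r (r + 1) := by rw [tr_up]; positivity
          have htd : 0 ≤ tr b r (r - 1) := by rw [tr_dn b r hr]; positivity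
          have hratio : 0 ≤ ratio a b r := by rw [ratio]; positivity
          apply mul_le_mul_of_nonneg_left _ hratio
          apply add_le_add
          · exact mul_le_mul_of_nonneg_left hup.2 htu
          · exact mul_le_mul_of_nonneg_left hdn.2 htd
      _ ≤ 1 := by
          have heq : ratio a b r * (tr b r (r + 1) * 1 + tr b r (r - 1) * 1) =
              (1 + b (r + 1)) / (1 + b (r + 1) + a r) := by
            rw [tr_up, tr_dn b r hr, ratio]
            field_simp
            ring
          rw [heq, div_le_one (by positivity)]
          linarith

lemma summable_G (n : ℕ) (a b : ℕ → ℝ) (ha : ∀ j < n, 0 ≤ a j)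
    (hb : ∀ j < n, 0 < b (j + 1)) (hn : 1 ≤ n) (r : ℕ) (hr : 1 ≤ r) (hrn : r < n) :
    Summable (G n a b r) :=
  summable_of_sum_range_le (fun k => G_nonneg n a b r k ha hb hr hrn)
    (fun K => partial_le n a b ha hb hn K r hr hrn)

noncomputable def Bf (n : ℕ) (a b : ℕ → ℝ) (x : ℕ) : ℝ :=
  if x = 0 then 1 else if x = n then 0 else ∑' k, G n a b x k

lemma E_tsum (n : ℕ) (a b : ℕ → ℝ) (ha : ∀ j < n, 0 ≤ a j)
    (hb : ∀ j < n, 0 < b (j + 1)) (hn : 1 ≤ n) (x : ℕ) (hx : x ≤ n) :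
    Summable (E n a b x) ∧ ∑' k, E n a b x k = Bf n a b x := by
  rcases Nat.eq_zero_or_pos x with rfl | hx0
  · have hE : E n a b 0 = fun k => if k = 0 then (1 : ℝ) else 0 :=
      funext fun k => by rw [E, if_pos rfl]
    rw [hE, Bf, if_pos rfl]
    constructor
    · exact summable_of_ne_finset_zero (s := {0}) fun k hk => if_neg (by simpa using hk)
    · exact tsum_eq_single 0 fun k hk => if_neg hk
  · rcases eq_or_lt_of_le hx with he | hxn
    · have hE : E n a b x = fun _ => (0 : ℝ) :=
        funext fun k => by rw [E, if_neg (by omega), if_pos he]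
      rw [hE, Bf, if_neg (by omega), if_pos he]
      exact ⟨summable_zero, tsum_zero⟩
    · have hE : E n a b x = G n a b x :=
        funext fun k => by rw [E, if_neg (by omega), if_neg (by omega)]
      rw [hE, Bf, if_neg (by omega), if_neg (by omega)]
      exact ⟨summable_G n a b ha hb hn x hx0 hxn, rfl⟩

lemma F_rec (n : ℕ) (a b : ℕ → ℝ) (ha : ∀ j < n, 0 ≤ a j)
    (hb : ∀ j < n, 0 < b (j + 1)) (hn : 1 ≤ n) (r : ℕ) (hr : 1 ≤ r) (hrn : r < n) :
    (1 + a r + b (r + 1)) * ∑' k, G n a b r k =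
      b (r + 1) * Bf n a b (r + 1) + Bf n a b (r - 1) := by
  have hbr : 0 < b (r + 1) := hb r hrn
  have har : 0 ≤ a r := ha r hrn
  have hSG := summable_G n a b ha hb hn r hr hrn
  have hup := E_tsum n a b ha hb hn (r + 1) (by omega)
  have hdn := E_tsum n a b ha hb hn (r - 1) (by omega)
  have h1 : ∑' k, G n a b r k =
      ratio a b r * (tr b r (r + 1) * Bf n a b (r + 1) + tr b r (r - 1) * Bf n a b (r - 1)) := by
    rw [Summable.tsum_eq_zero_add hSG, G_zero n a b r hr, zero_add]
    calc ∑' k, G n a b r (k + 1)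
        = ∑' k, ratio a b r *
            (tr b r (r + 1) * E n a b (r + 1) k + tr b r (r - 1) * E n a b (r - 1) k) :=
          tsum_congr fun k => key n a b r k hr hrn
      _ = ratio a b r * ∑' k,
            (tr b r (r + 1) * E n a b (r + 1) k + tr b r (r - 1) * E n a b (r - 1) k) :=
          tsum_mul_left
      _ = ratio a b r * (tr b r (r + 1) * ∑' k, E n a b (r + 1) k
            + tr b r (r - 1) * ∑' k, E n a b (r - 1) k) := by
          rw [Summable.tsum_add (hup.1.mul_left _) (hdn.1.mul_left _), tsum_mul_left, tsum_mul_left]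
      _ = _ := by rw [hup.2, hdn.2]
  rw [h1, tr_up, tr_dn b r hr, ratio]
  field_simp
  ring

section Riccati

variable (n : ℕ) (a b z : ℕ → ℝ)

lemma z_bounds (ha : ∀ j < n, 0 ≤ a j) (hb : ∀ j < n, 0 < b (j + 1)) (hzn : z n = 0)
    (hz : ∀ j < n, z j = 1 / (1 + a j + b (j + 1) * (1 - z (j + 1)))) :
    ∀ m, ∀ j, n = j + m → 0 ≤ z j ∧ z j ≤ 1 := by
  intro m
  induction m with
  | zero => intro j hj; rw [show j = n by omega, hzn]; norm_num
  | succ m ih =>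
    intro j hj
    have hjn : j < n := by omega
    have hih := ih (j + 1) (by omega)
    have hbj := hb j hjn
    have haj := ha j hjn
    have hden : (1 : ℝ) ≤ 1 + a j + b (j + 1) * (1 - z (j + 1)) := by nlinarith
    rw [hz j hjn]
    constructor
    · positivity
    · rw [div_le_one (by linarith)]; linarith

lemma Z_rec (ha : ∀ j < n, 0 ≤ a j) (hb : ∀ j < n, 0 < b (j + 1)) (hzn : z n = 0)
    (hz : ∀ j < n, z j = 1 / (1 + a j + b (j + 1) * (1 - z (j + 1))))
    (r : ℕ) (hr : 1 ≤ r) (hrn : r < n) :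
    (1 + a r + b (r + 1)) * ∏ j ∈ Finset.Icc 1 r, z j =
      b (r + 1) * ∏ j ∈ Finset.Icc 1 (r + 1), z j + ∏ j ∈ Finset.Icc 1 (r - 1), z j := by
  have hb1 := z_bounds n a b z ha hb hzn hz (n - (r + 1)) (r + 1) (by omega)
  have hden : (1 : ℝ) ≤ 1 + a r + b (r + 1) * (1 - z (r + 1)) := by
    have := hb r hrn
    have := ha r hrn
    nlinarith
  have hzr : z r * (1 + a r + b (r + 1) * (1 - z (r + 1))) = 1 := by
    rw [hz r hrn]
    field_simp
  have h1 : ∏ j ∈ Finset.Icc 1 r, z j = (∏ j ∈ Finset.Icc 1 (r - 1), z j) * z r := by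
    have h2 : r - 1 + 1 = r := by omega
    rw [← h2, Finset.prod_Icc_succ_top (by omega), h2]
  have h3 : ∏ j ∈ Finset.Icc 1 (r + 1), z j = (∏ j ∈ Finset.Icc 1 r, z j) * z (r + 1) :=
    Finset.prod_Icc_succ_top (by omega) _
  rw [h3, h1]
  set P := ∏ j ∈ Finset.Icc 1 (r - 1), z j
  linear_combination P * hzr
end Riccati

lemma lin_pos (n : ℕ) (hn : 1 ≤ n) (c β : ℕ → ℝ)
    (hc : ∀ r, 1 ≤ r → r < n → 1 + β r ≤ c r) (hβ : ∀ r, 1 ≤ r → r < n → 0 < β r)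
    (D : ℕ → ℝ) (h0 : D 0 = 0)
    (heq : ∀ r, 1 ≤ r → r < n → c r * D r = β r * D (r + 1) + D (r - 1))
    (h1 : 0 < D 1) : 0 < D n := by
  have mono : ∀ r, 1 ≤ r → r ≤ n → D (r - 1) ≤ D r ∧ D 1 ≤ D r := by
    intro r
    induction r with
    | zero => omega
    | succ r ih =>
      intro _ h2
      rcases Nat.eq_zero_or_pos r with rfl | hrpos
      · exact ⟨by rw [show 1 - 1 = 0 from rfl, h0]; exact le_of_lt h1, le_refl _⟩
      · have hr0 := ih hrpos (by omega)
        have heqr := heq r hrpos (by omega)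
        have hβr := hβ r hrpos (by omega)
        have hcr := hc r hrpos (by omega)
        have hDrpos : 0 < D r := lt_of_lt_of_le h1 hr0.2
        have hstep : β r * D r ≤ β r * D (r + 1) := by nlinarith [hr0.1]
        have h4 : D r ≤ D (r + 1) := le_of_mul_le_mul_left hstep hβr
        exact ⟨by simpa using h4, le_trans hr0.2 h4⟩
  exact lt_of_lt_of_le h1 (mono n hn le_rfl).2

lemma lin_zero (n : ℕ) (hn : 1 ≤ n) (c β : ℕ → ℝ)
    (hc : ∀ r, 1 ≤ r → r < n → 1 + β r ≤ c r) (hβ : ∀ r, 1 ≤ r → r < n → 0 < β r)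
    (D : ℕ → ℝ) (h0 : D 0 = 0) (hDn : D n = 0)
    (heq : ∀ r, 1 ≤ r → r < n → c r * D r = β r * D (r + 1) + D (r - 1)) :
    ∀ r, r ≤ n → D r = 0 := by
  rcases lt_trichotomy (D 1) 0 with h | h | h
  · exfalso
    have := lin_pos n hn c β hc hβ (fun x => -D x) (by simp [h0])
      (fun r h1 h2 => by linear_combination -(heq r h1 h2)) (by simpa using h)
    simp [hDn] at this
  · have haux : ∀ r, r + 1 ≤ n → D r = 0 ∧ D (r + 1) = 0 := by
      intro r
      induction r with
      | zero => intro _; exact ⟨h0, h⟩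
      | succ r ih =>
        intro hle
        obtain ⟨e1, e2⟩ := ih (by omega)
        have heqr := heq (r + 1) (by omega) (by omega)
        have hβr := hβ (r + 1) (by omega) (by omega)
        refine ⟨e2, ?_⟩
        rw [show r + 1 - 1 = r from rfl, e1, e2, mul_zero, add_zero] at heqr
        have := mul_eq_zero.mp heqr.symm
        rcases this with h' | h'
        · exact absurd h' (ne_of_gt hβr)
        · exact h'
    intro r hr
    rcases Nat.eq_zero_or_pos r with rfl | hp
    · exact h0
    · obtain ⟨r', rfl⟩ : ∃ r', r = r' + 1 := ⟨r - 1, by omega⟩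
      exact (haux r' (by omega)).2
  · exfalso
    have := lin_pos n hn c β hc hβ D h0 heq h
    rw [hDn] at this
    exact lt_irrefl _ this

end Stmt10

/-- Spine random walk lemma: the product `∏_{j=1}^r z_j` of the backward Riccati recursion
equals the expectation, over the birth–death chain started at `r` with up-probability
`b_{j+1}/(1+b_{j+1})` from `j`, of the local-time functional
`1{τ(0) < τ(n)} ∏_{j=1}^{n−1} ((1+b_{j+1})/(1+b_{j+1}+a_j))^{L^j_{τ(0)}}`.
The expectation is written as a sum over all finite paths `p` of length `k` from `r` to `0`
avoiding `0` and `n` strictly before time `k`, weighted by the product of the transition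
probabilities. -/
theorem stmt10 (n r : ℕ) (hn : 2 ≤ n) (hr : 1 ≤ r) (hrn : r < n)
    (a b : ℕ → ℝ) (ha : ∀ j < n, 0 ≤ a j) (hb : ∀ j < n, 0 < b (j + 1))
    (z : ℕ → ℝ) (hzn : z n = 0)
    (hz : ∀ j < n, z j = 1 / (1 + a j + b (j + 1) * (1 - z (j + 1)))) :
    ∏ j ∈ Finset.Icc 1 r, z j =
      ∑' k : ℕ, ∑ p : Fin (k + 1) → Fin (n + 1),
        (if (p 0 : ℕ) = r ∧ (p (Fin.last k) : ℕ) = 0 ∧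
            (∀ i : Fin (k + 1), 0 < (i : ℕ) → (i : ℕ) < k →
              (p i : ℕ) ≠ 0 ∧ (p i : ℕ) ≠ n) then
          (∏ i : Fin k,
            (if (p i.succ : ℕ) = (p i.castSucc : ℕ) + 1 then
              b ((p i.castSucc : ℕ) + 1) / (1 + b ((p i.castSucc : ℕ) + 1))
            else if (p i.succ : ℕ) + 1 = (p i.castSucc : ℕ) then
              1 / (1 + b ((p i.castSucc : ℕ) + 1))
            else 0)) *
          ∏ j ∈ Finset.Icc 1 (n - 1),
            ((1 + b (j + 1)) / (1 + b (j + 1) + a j)) ^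
              (Finset.univ.filter (fun i : Fin k => (p i.castSucc : ℕ) = j)).card
        else 0) := by
  classical
  have hn1 : 1 ≤ n := by omega
  set D : ℕ → ℝ := fun x => (∏ j ∈ Finset.Icc 1 x, z j) - Stmt10.Bf n a b x with hD
  have hZn : (∏ j ∈ Finset.Icc 1 n, z j) = 0 :=
    Finset.prod_eq_zero (Finset.mem_Icc.mpr ⟨hn1, le_rfl⟩) hzn
  have hD0 : D 0 = 0 := by simp [hD, Stmt10.Bf]
  have hDn : D n = 0 := by
    simp only [hD, hZn, Stmt10.Bf, if_neg (show n ≠ 0 by omega), if_pos rfl]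
    simp
  have heq : ∀ r', 1 ≤ r' → r' < n →
      (1 + a r' + b (r' + 1)) * D r' = b (r' + 1) * D (r' + 1) + D (r' - 1) := by
    intro r' h1 h2
    have hZr := Stmt10.Z_rec n a b z ha hb hzn hz r' h1 h2
    have hFr := Stmt10.F_rec n a b ha hb hn1 r' h1 h2
    have hBmid : Stmt10.Bf n a b r' = ∑' k, Stmt10.G n a b r' k := by
      rw [Stmt10.Bf, if_neg (by omega), if_neg (by omega)]
    simp only [hD]
    linear_combination hZr - hFr - (1 + a r' + b (r' + 1)) * hBmid
  have hall := Stmt10.lin_zero n hn1 (fun r' => 1 + a r' + b (r' + 1)) (fun r' => b (r' + 1))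
    (fun r' _ h2 => by
      have := ha r' h2
      show 1 + b (r' + 1) ≤ 1 + a r' + b (r' + 1)
      linarith)
    (fun r' _ h2 => hb r' h2) D hD0 hDn heq
  have hDr := hall r (le_of_lt hrn)
  have hmain : (∏ j ∈ Finset.Icc 1 r, z j) = Stmt10.Bf n a b r := by
    have : (∏ j ∈ Finset.Icc 1 r, z j) - Stmt10.Bf n a b r = 0 := hDr
    linarith
  calc ∏ j ∈ Finset.Icc 1 r, z j
      = Stmt10.Bf n a b r := hmain
    _ = ∑' k, Stmt10.G n a b r k := by
        rw [Stmt10.Bf, if_neg (by omega), if_neg (by omega)]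
    _ = _ := rfl
end

section
/- Let γ_n and β_n be defined on vertices x with 0 < |x| < n of a rooted tree by the recursions γ_n(x) = (1 + Σ_{i=1}^{d_x} γ_n(x_i))/(λ + Σ_{i=1}^{d_x} β_n(x_i)) and β_n(x) = (Σ_{i=1}^{d_x} β_n(x_i))/(λ + Σ_{i=1}^{d_x} β_n(x_i)), with boundary conditions γ_n(x) = 0 and β_n(x) = 1 for |x| = n. Define Γ_n(x) = Σ_{i=1}^{d_x} γ_n(x_i) and B_n(x) = λ⁻¹ Σ_{i=1}^{d_x} β_n(x_i). Then Γ_n(o) = Σ_{r=1}^{n−1} λ^{−r} Σ_{|u|=r} ∏_{j=1}^{r} (1 + B_n(u_j))⁻¹, where (u_0 = o, u_1, …, u_r = u) is the path from the root to u. -/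
/-- Finset of valid paths of length `r` in the tree with degree function `d`. -/
def stmtV : ℕ → (List ℕ → ℕ) → Finset (List ℕ)
  | 0, _ => {[]}
  | r + 1, d => (Finset.range (d [])).biUnion fun i =>
      (stmtV r (fun w => d (i :: w))).image fun w => i :: w

lemma mem_stmtV : ∀ (r : ℕ) (d : List ℕ → ℕ) (u : List ℕ),
    u ∈ stmtV r d ↔ u.length = r ∧ ∀ j, j < r → u.getD j 0 < d (u.take j) := by
  intro r
  induction r with
  | zero =>
    intro d u
    simp only [stmtV, Finset.mem_singleton]
    constructor
    · rintro rfl; simp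
    · rintro ⟨h, -⟩; exact List.eq_nil_of_length_eq_zero h
  | succ r ih =>
    intro d u
    simp only [stmtV, Finset.mem_biUnion, Finset.mem_range, Finset.mem_image]
    constructor
    · rintro ⟨i, hi, w, hw, rfl⟩
      obtain ⟨hlen, hval⟩ := (ih _ w).1 hw
      refine ⟨by simp [hlen], ?_⟩
      intro j hj
      cases j with
      | zero => simpa using hi
      | succ j =>
        have := hval j (by omega)
        simpa using this
    · rintro ⟨hlen, hval⟩
      cases u with
      | nil => simp at hlen
      | cons i w =>
        refine ⟨i, by simpa using hval 0 (by omega), w, ?_, rfl⟩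
        refine (ih _ w).2 ⟨by simpa using hlen, ?_⟩
        intro j hj
        have := hval (j + 1) (by omega)
        simpa using this

lemma sum_stmtV_succ (r : ℕ) (d : List ℕ → ℕ) (f : List ℕ → ℝ) :
    ∑ u ∈ stmtV (r + 1) d, f u =
      ∑ i ∈ Finset.range (d []), ∑ w ∈ stmtV r (fun w => d (i :: w)), f (i :: w) := by
  rw [stmtV, Finset.sum_biUnion]
  · refine Finset.sum_congr rfl fun i _ => ?_
    rw [Finset.sum_image]
    intro a _ b _ h
    simpa using h
  · intro i _ j _ hij
    simp only [Finset.disjoint_left, Finset.mem_image]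
    rintro u ⟨a, -, rfl⟩ ⟨b, -, hb⟩
    exact hij (by simpa using (List.cons.injEq _ _ _ _ ▸ hb).1.symm ▸ rfl)


/-- Iterating the exit-time recursion on a rooted tree (vertices encoded as lists of child
indices): `Γ_n(o) = Σ_{r=1}^{n−1} λ^{−r} Σ_{|u|=r} ∏_{j=1}^{r} (1 + B_n(u_j))⁻¹`. -/
theorem stmt12 (n : ℕ) (hn : 2 ≤ n)
    (lam : ℝ) (hlam : 0 < lam)
    (d : List ℕ → ℕ) (hd : ∀ x, 1 ≤ d x)
    (β γ : List ℕ → ℝ) (hβnn : ∀ x, 0 ≤ β x)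
    (hβbd : ∀ x : List ℕ, x.length = n → β x = 1)
    (hγbd : ∀ x : List ℕ, x.length = n → γ x = 0)
    (hβrec : ∀ x : List ℕ, 0 < x.length → x.length < n →
      β x = (∑ i ∈ Finset.range (d x), β (x ++ [i])) /
        (lam + ∑ i ∈ Finset.range (d x), β (x ++ [i])))
    (hγrec : ∀ x : List ℕ, 0 < x.length → x.length < n →
      γ x = (1 + ∑ i ∈ Finset.range (d x), γ (x ++ [i])) /
        (lam + ∑ i ∈ Finset.range (d x), β (x ++ [i])))
    (B Γ : List ℕ → ℝ)
    (hB : ∀ x, B x = lam⁻¹ * ∑ i ∈ Finset.range (d x), β (x ++ [i]))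
    (hΓ : ∀ x, Γ x = ∑ i ∈ Finset.range (d x), γ (x ++ [i])) :
    Γ [] = ∑ r ∈ Finset.Icc 1 (n - 1), lam⁻¹ ^ r *
      ∑' u : List ℕ,
        (if u.length = r ∧ (∀ j, ∀ h : j < r, u.getD j 0 < d (u.take j)) then
          ∏ j ∈ Finset.Icc 1 r, (1 + B (u.take j))⁻¹
        else 0) := by
  -- positivity of denominators
  have hden : ∀ x : List ℕ, 0 < lam + ∑ i ∈ Finset.range (d x), β (x ++ [i]) := by
    intro x
    have : 0 ≤ ∑ i ∈ Finset.range (d x), β (x ++ [i]) :=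
      Finset.sum_nonneg fun i _ => hβnn _
    linarith
  -- γ in terms of Γ and B
  have hγB : ∀ x : List ℕ, 0 < x.length → x.length < n →
      γ x = lam⁻¹ * (1 + B x)⁻¹ * (1 + Γ x) := by
    intro x h1 h2
    have hden' := hden x
    have hdd : lam + ∑ i ∈ Finset.range (d x), β (x ++ [i]) = lam * (1 + B x) := by
      rw [hB]; field_simp
    rw [hγrec x h1 h2, hdd, ← hΓ x]
    rw [div_eq_mul_inv, mul_inv]
    ring
  -- key induction
  have key : ∀ m : ℕ, ∀ x : List ℕ, x.length + m = n - 1 →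
      Γ x = ∑ r ∈ Finset.Icc 1 m, lam⁻¹ ^ r *
        ∑ u ∈ stmtV r (fun w => d (x ++ w)),
          ∏ j ∈ Finset.Icc 1 r, (1 + B (x ++ u.take j))⁻¹ := by
    intro m
    induction m with
    | zero =>
      intro x hx
      rw [hΓ, show Finset.Icc 1 0 = (∅ : Finset ℕ) from by simp, Finset.sum_empty]
      refine Finset.sum_eq_zero fun i _ => hγbd _ (by simp; omega)
    | succ m ih =>
      intro x hx
      -- rewrite Γ x
      rw [hΓ]
      have hγi : ∀ i : ℕ, γ (x ++ [i]) = lam⁻¹ * (1 + B (x ++ [i]))⁻¹ * (1 + Γ (x ++ [i])) := by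
        intro i
        exact hγB _ (by simp) (by simp; omega)
      -- RHS: reindex r = s+1
      have hIcc : Finset.Icc 1 (m + 1) = Finset.Ico 1 (m + 2) := by
        rw [Nat.Icc_eq_range']; rw [Nat.Ico_eq_range']
      rw [hIcc, Finset.sum_Ico_eq_sum_range]
      simp only [show m + 2 - 1 = m + 1 from rfl]
      have step : ∀ s : ℕ, s < m + 1 →
          (lam⁻¹ ^ (1 + s) *
            ∑ u ∈ stmtV (1 + s) (fun w => d (x ++ w)),
              ∏ j ∈ Finset.Icc 1 (1 + s), (1 + B (x ++ u.take j))⁻¹)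
          = lam⁻¹ * ∑ i ∈ Finset.range (d x),
              (1 + B (x ++ [i]))⁻¹ * (lam⁻¹ ^ s *
                ∑ w ∈ stmtV s (fun w => d ((x ++ [i]) ++ w)),
                  ∏ j ∈ Finset.Icc 1 s, (1 + B ((x ++ [i]) ++ w.take j))⁻¹) := by
        intro s hs
        rw [show 1 + s = s + 1 from by omega, sum_stmtV_succ]
        simp only [List.append_nil, Finset.mul_sum]
        refine Finset.sum_congr rfl fun i hi => ?_
        have hdeq : (stmtV s fun w => d (x ++ i :: w)) = stmtV s fun w => d ((x ++ [i]) ++ w) := by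
          congr 1
          funext w
          simp
        rw [hdeq]
        refine Finset.sum_congr rfl fun w hw => ?_
        -- product split
        have hprod : ∏ j ∈ Finset.Icc 1 (s + 1), (1 + B (x ++ (i :: w).take j))⁻¹
            = (1 + B (x ++ [i]))⁻¹ *
              ∏ j ∈ Finset.Icc 1 s, (1 + B ((x ++ [i]) ++ w.take j))⁻¹ := by
          have e1 : Finset.Icc 1 (s + 1) = Finset.Ico 1 (s + 2) := by
            rw [Nat.Icc_eq_range', Nat.Ico_eq_range']
          have e2 : Finset.Icc 1 s = Finset.Ico 1 (s + 1) := by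
            rw [Nat.Icc_eq_range', Nat.Ico_eq_range']
          rw [e1, e2, Finset.prod_Ico_eq_prod_range, Finset.prod_Ico_eq_prod_range]
          simp only [show s + 2 - 1 = s + 1 from rfl, show s + 1 - 1 = s from rfl]
          rw [Finset.prod_range_succ']
          have h0 : (1 + B (x ++ List.take (1 + 0) (i :: w)))⁻¹ = (1 + B (x ++ [i]))⁻¹ := by
            norm_num
          have hrest : ∏ j ∈ Finset.range s, (1 + B (x ++ List.take (1 + (j + 1)) (i :: w)))⁻¹
              = ∏ j ∈ Finset.range s, (1 + B ((x ++ [i]) ++ List.take (1 + j) w))⁻¹ := by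
            refine Finset.prod_congr rfl fun j _ => ?_
            congr 3
            rw [show 1 + (j + 1) = (1 + j) + 1 from by omega, List.take_succ_cons,
              List.append_cons]
          rw [h0, hrest, mul_comm]
        rw [hprod]
        rw [pow_succ]
        ring
      rw [Finset.sum_congr rfl (fun s hs => step s (Finset.mem_range.mp hs))]
      rw [← Finset.mul_sum, Finset.sum_comm]
      rw [Finset.mul_sum]
      refine Finset.sum_congr rfl fun i hi => ?_
      rw [hγi i]
      have hIH : Γ (x ++ [i]) = ∑ r ∈ Finset.Icc 1 m, lam⁻¹ ^ r *
          ∑ u ∈ stmtV r (fun w => d ((x ++ [i]) ++ w)),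
            ∏ j ∈ Finset.Icc 1 r, (1 + B ((x ++ [i]) ++ u.take j))⁻¹ := by
        refine ih (x ++ [i]) ?_
        simp at hx ⊢
        omega
      -- sum over range (m+1) = term at 0 + sum over Icc 1 m
      have hsplit : ∑ s ∈ Finset.range (m + 1),
          (1 + B (x ++ [i]))⁻¹ * (lam⁻¹ ^ s *
            ∑ w ∈ stmtV s (fun w => d ((x ++ [i]) ++ w)),
              ∏ j ∈ Finset.Icc 1 s, (1 + B ((x ++ [i]) ++ w.take j))⁻¹)
          = (1 + B (x ++ [i]))⁻¹ * (1 + Γ (x ++ [i])) := by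
        rw [← Finset.mul_sum]
        congr 1
        rw [Finset.range_eq_Ico, show Finset.Ico 0 (m+1) = insert 0 (Finset.Ico 1 (m+1)) from ?_,
          Finset.sum_insert (by simp)]
        · have : Finset.Ico 1 (m + 1) = Finset.Icc 1 m := by
            rw [Nat.Icc_eq_range', Nat.Ico_eq_range']
          rw [this, ← hIH]
          congr 1
          simp [stmtV]
        · ext a; simp; omega
      rw [hsplit]
      ring
  -- apply key at root and convert tsum to finite sum
  have hroot := key (n - 1) [] (by simp)
  rw [hroot]
  refine Finset.sum_congr rfl fun r hr => ?_
  congr 1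
  rw [tsum_eq_sum (s := stmtV r d)
    (fun u hu => by
      rw [if_neg]
      intro hcond
      exact hu ((mem_stmtV r d u).2 ⟨hcond.1, fun j hj => hcond.2 j hj⟩))]
  refine Finset.sum_congr rfl fun u hu => ?_
  have := (mem_stmtV r d u).1 hu
  rw [if_pos ⟨this.1, fun j hj => this.2 j hj⟩]
  rfl
end

section
/- Let (M_k)_{k≥1} be a sequence of positive random variables converging a.s. to a positive random variable M_∞ with E[1/M_k] = 1 for all k, and suppose P(1/M_k > t) ≤ e · E[e^{−t M_∞}] for all t > 0 and k. Let ζ be a positive random variable independent of (M_k) with E[ζ] < ∞. Then the family {ζ/M_k}_{k≥1} is uniformly integrable. -/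
open MeasureTheory ProbabilityTheory Filter Set
open scoped ENNReal NNReal

lemma stmt18_exp_tail {c : ℝ} (hc : 0 < c) (b : ℝ) :
    ∫ t in Set.Ioi b, Real.exp (-t * c) = Real.exp (-b * c) / c := by
  have hfun : (fun t : ℝ => Real.exp (-t * c)) = fun t => Real.exp (-c * t) := by
    funext t; ring_nf
  have hint : MeasureTheory.IntegrableOn (fun t : ℝ => Real.exp (-t * c)) (Set.Ioi b) := by
    rw [hfun]; exact exp_neg_integrableOn_Ioi b hc
  have hderiv : ∀ x ∈ Set.Ici b, HasDerivAt (fun t => -Real.exp (-t * c) / c)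
      (Real.exp (-x * c)) x := by
    intro x _
    have h := ((((hasDerivAt_id x).neg).mul_const c).exp).neg.div_const c
    refine h.congr_deriv ?_
    simp only [Pi.neg_apply, id]
    field_simp
  have htend : Filter.Tendsto (fun t => -Real.exp (-t * c) / c) Filter.atTop (nhds 0) := by
    have h1 : Filter.Tendsto (fun t : ℝ => -t * c) Filter.atTop Filter.atBot := by
      have := (Filter.tendsto_id (α := ℝ) (x := Filter.atTop)).atTop_mul_const hc
      exact Filter.tendsto_neg_atTop_atBot.comp this |>.congr (fun t => by simp [Function.comp, neg_mul])
    have h2 : Filter.Tendsto (fun t : ℝ => Real.exp (-t * c)) Filter.atTop (nhds 0) :=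
      Real.tendsto_exp_atBot.comp h1
    simpa using (h2.neg.div_const c)
  have := MeasureTheory.integral_Ioi_of_hasDerivAt_of_tendsto' hderiv hint htend
  rw [this]
  field_simp
  ring

lemma stmt18_inner {Mv b : ℝ} (hM : 0 < Mv) (hb : 0 < b) :
    (∫⁻ t in Set.Ioi (0:ℝ), ENNReal.ofReal (Real.exp (-(max b t) * Mv)))
      = ENNReal.ofReal (b * Real.exp (-b * Mv)) + ENNReal.ofReal (Real.exp (-b * Mv) / Mv) := by
  rw [← Set.Ioc_union_Ioi_eq_Ioi hb.le,
    lintegral_union measurableSet_Ioi (Set.Ioc_disjoint_Ioi le_rfl)]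
  congr 1
  · rw [setLIntegral_congr_fun measurableSet_Ioc
      (fun t ht => by rw [max_eq_left ht.2])]
    rw [setLIntegral_const, Real.volume_Ioc, ← ENNReal.ofReal_mul (Real.exp_pos _).le]
    rw [sub_zero, mul_comm]
  · have h1 : ∀ᵐ t ∂(volume : Measure ℝ), t ∈ Set.Ioi b →
        ENNReal.ofReal (Real.exp (-(max b t) * Mv)) = ENNReal.ofReal (Real.exp (-t * Mv)) :=
      Filter.Eventually.of_forall fun t ht => by rw [max_eq_right (le_of_lt ht)]
    rw [setLIntegral_congr_fun_ae measurableSet_Ioi h1]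
    have hint : MeasureTheory.IntegrableOn (fun t : ℝ => Real.exp (-t * Mv)) (Set.Ioi b) := by
      have hfun : (fun t : ℝ => Real.exp (-t * Mv)) = fun t => Real.exp (-Mv * t) := by
        funext t; ring_nf
      rw [hfun]; exact exp_neg_integrableOn_Ioi b hM
    rw [← MeasureTheory.ofReal_integral_eq_lintegral_ofReal hint
      (Filter.Eventually.of_forall fun t => (Real.exp_pos _).le)]
    rw [stmt18_exp_tail hM b]

lemma stmt18_tail_bound {Ω : Type*} [MeasurableSpace Ω] {μ : Measure Ω} [IsProbabilityMeasure μ]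
    {X Minf : Ω → ℝ} (hX : Measurable X) (hMinf : Measurable Minf)
    (hMinfpos : ∀ ω, 0 < Minf ω)
    (htail : ∀ t : ℝ, 0 < t → μ {ω | t < X ω} ≤
      ENNReal.ofReal (Real.exp 1 * ∫ ω, Real.exp (-t * Minf ω) ∂μ))
    {b : ℝ} (hb : 0 < b) :
    (∫⁻ ω, (if b < X ω then ENNReal.ofReal (X ω) else 0) ∂μ) ≤
      ENNReal.ofReal (Real.exp 1) *
        ∫⁻ ω, (ENNReal.ofReal (b * Real.exp (-b * Minf ω))
          + ENNReal.ofReal (Real.exp (-b * Minf ω) / Minf ω)) ∂μ := by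
  set T : Ω → ℝ := fun ω => if b < X ω then X ω else 0 with hTdef
  have hTmeas : Measurable T :=
    Measurable.ite (measurableSet_lt measurable_const hX) hX measurable_const
  have hTnn : 0 ≤ᵐ[μ] T := Filter.Eventually.of_forall fun ω => by
    by_cases h : b < X ω <;> simp [T, h]
    linarith [lt_trans hb h]
  have hrw : (fun ω => if b < X ω then ENNReal.ofReal (X ω) else 0)
      = fun ω => ENNReal.ofReal (T ω) := by
    funext ω; by_cases h : b < X ω <;> simp [T, h]
  rw [hrw, MeasureTheory.lintegral_eq_lintegral_meas_lt μ hTnn hTmeas.aemeasurable]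
  have hunc : Measurable (Function.uncurry fun (t : ℝ) (ω : Ω) =>
      ENNReal.ofReal (Real.exp (-(max b t) * Minf ω))) := by
    apply ENNReal.measurable_ofReal.comp
    apply Real.measurable_exp.comp
    exact ((measurable_const.max measurable_fst).neg).mul (hMinf.comp measurable_snd)
  have hg : Measurable fun t : ℝ => ENNReal.ofReal (Real.exp 1) *
      ∫⁻ ω, ENNReal.ofReal (Real.exp (-(max b t) * Minf ω)) ∂μ :=
    (Measurable.lintegral_prod_right hunc).const_mul _
  have hbound : ∀ t ∈ Set.Ioi (0:ℝ), μ {a | t < T a} ≤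
      ENNReal.ofReal (Real.exp 1) *
        ∫⁻ ω, ENNReal.ofReal (Real.exp (-(max b t) * Minf ω)) ∂μ := by
    intro t ht
    have ht' : (0:ℝ) < t := ht
    have hsub : {a | t < T a} ⊆ {a | max b t < X a} := by
      intro a ha
      simp only [Set.mem_setOf_eq, T] at ha ⊢
      by_cases h : b < X a
      · rw [if_pos h] at ha; exact max_lt h ha
      · rw [if_neg h] at ha; linarith
    have hmaxpos : 0 < max b t := lt_max_iff.mpr (Or.inl hb)
    have hexpint : MeasureTheory.Integrable (fun ω => Real.exp (-(max b t) * Minf ω)) μ := by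
      refine MeasureTheory.Integrable.mono' (MeasureTheory.integrable_const 1)
        ((Real.measurable_exp.comp (hMinf.const_mul (-(max b t)))).aestronglyMeasurable) ?_
      refine Filter.Eventually.of_forall fun ω => ?_
      rw [Real.norm_eq_abs, abs_of_pos (Real.exp_pos _)]
      refine Real.exp_le_one_iff.mpr ?_
      have := hMinfpos ω
      nlinarith
    calc μ {a | t < T a} ≤ μ {a | max b t < X a} := measure_mono hsub
      _ ≤ ENNReal.ofReal (Real.exp 1 * ∫ ω, Real.exp (-(max b t) * Minf ω) ∂μ) :=
          htail _ hmaxpos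
      _ = _ := by
          rw [ENNReal.ofReal_mul (Real.exp_pos 1).le,
            MeasureTheory.ofReal_integral_eq_lintegral_ofReal hexpint
              (Filter.Eventually.of_forall fun ω => (Real.exp_pos _).le)]
  calc (∫⁻ t in Set.Ioi (0:ℝ), μ {a | t < T a})
      ≤ ∫⁻ t in Set.Ioi (0:ℝ), ENNReal.ofReal (Real.exp 1) *
          ∫⁻ ω, ENNReal.ofReal (Real.exp (-(max b t) * Minf ω)) ∂μ :=
        setLIntegral_mono hg hbound
    _ = ENNReal.ofReal (Real.exp 1) * ∫⁻ t in Set.Ioi (0:ℝ),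
          ∫⁻ ω, ENNReal.ofReal (Real.exp (-(max b t) * Minf ω)) ∂μ :=
        lintegral_const_mul' _ _ ENNReal.ofReal_ne_top
    _ = ENNReal.ofReal (Real.exp 1) * ∫⁻ ω, (∫⁻ t in Set.Ioi (0:ℝ),
          ENNReal.ofReal (Real.exp (-(max b t) * Minf ω))) ∂μ := by
        rw [lintegral_lintegral_swap hunc.aemeasurable]
    _ = _ := by
        congr 1
        exact lintegral_congr fun ω => stmt18_inner (hMinfpos ω) hb

set_option maxHeartbeats 1000000 in
/-- Uniform integrability of `ζ/M_k`: if `M_k > 0` converge a.s. to `M_∞ > 0`,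
`E[1/M_k] = 1`, the tail bound `P(1/M_k > t) ≤ e·E[e^{−t M_∞}]` holds, and `ζ > 0` is
integrable and independent of the family `(M_k)`, then `{ζ/M_k}` is uniformly
integrable. -/
theorem stmt18 {Ω : Type*} [m0 : MeasurableSpace Ω] (μ : Measure Ω) [IsProbabilityMeasure μ]
    (M : ℕ → Ω → ℝ) (Minf ζ : Ω → ℝ)
    (hMmeas : ∀ k, Measurable (M k)) (hMinfmeas : Measurable Minf)
    (hζmeas : Measurable ζ)
    (hMpos : ∀ k ω, 0 < M k ω) (hMinfpos : ∀ ω, 0 < Minf ω)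
    (hconv : ∀ᵐ ω ∂μ, Filter.Tendsto (fun k => M k ω) Filter.atTop (nhds (Minf ω)))
    (hmean : ∀ k, ∫ ω, (M k ω)⁻¹ ∂μ = 1)
    (htail : ∀ k, ∀ t : ℝ, 0 < t →
      μ {ω | t < (M k ω)⁻¹} ≤
        ENNReal.ofReal (Real.exp 1 * ∫ ω, Real.exp (-t * Minf ω) ∂μ))
    (hζpos : ∀ ω, 0 < ζ ω) (hζint : Integrable ζ μ)
    (hindep : Indep (MeasurableSpace.comap ζ inferInstance)
      (⨆ k, MeasurableSpace.comap (M k) inferInstance) μ) :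
    UniformIntegrable (fun k ω => ζ ω / M k ω) 1 μ := by
  classical
  have hXmeas : ∀ k, Measurable fun ω => (M k ω)⁻¹ := fun k => (hMmeas k).inv
  have hfmeas : ∀ k, AEStronglyMeasurable (fun ω => ζ ω / M k ω) μ :=
    fun k => (hζmeas.div (hMmeas k)).aestronglyMeasurable
  -- Step 1 : lintegral of 1/M_k is 1
  have hlint1 : ∀ k, (∫⁻ ω, ENNReal.ofReal ((M k ω)⁻¹) ∂μ) = 1 := by
    intro k
    have hnn : (0 : Ω → ℝ) ≤ᵐ[μ] fun ω => (M k ω)⁻¹ :=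
      Filter.Eventually.of_forall fun ω => (inv_pos.mpr (hMpos k ω)).le
    have h := MeasureTheory.integral_eq_lintegral_of_nonneg_ae hnn
      ((hXmeas k).aestronglyMeasurable)
    rw [hmean k] at h
    by_cases htop : (∫⁻ ω, ENNReal.ofReal ((M k ω)⁻¹) ∂μ) = ⊤
    · rw [htop] at h; simp at h
    · rw [← ENNReal.ofReal_toReal htop, ← h, ENNReal.ofReal_one]
  -- Step 2 : Fatou
  have hFatou : (∫⁻ ω, ENNReal.ofReal ((Minf ω)⁻¹) ∂μ) ≤ 1 := by
    have hae : ∀ᵐ ω ∂μ, ENNReal.ofReal ((Minf ω)⁻¹)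
        = Filter.liminf (fun k => ENNReal.ofReal ((M k ω)⁻¹)) Filter.atTop := by
      filter_upwards [hconv] with ω hω
      exact ((ENNReal.tendsto_ofReal (hω.inv₀ (hMinfpos ω).ne')).liminf_eq).symm
    calc (∫⁻ ω, ENNReal.ofReal ((Minf ω)⁻¹) ∂μ)
        = ∫⁻ ω, Filter.liminf (fun k => ENNReal.ofReal ((M k ω)⁻¹)) Filter.atTop ∂μ :=
          lintegral_congr_ae hae
      _ ≤ Filter.liminf (fun k => ∫⁻ ω, ENNReal.ofReal ((M k ω)⁻¹) ∂μ) Filter.atTop :=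
          lintegral_liminf_le fun k => (hXmeas k).ennreal_ofReal
      _ = 1 := by simp only [hlint1]; exact Filter.liminf_const 1
  -- Lζ
  set Lζ : ℝ≥0∞ := ∫⁻ ω, ENNReal.ofReal (ζ ω) ∂μ with hLζ
  have hLζtop : Lζ ≠ ⊤ := by
    have h : Lζ = ∫⁻ ω, (‖ζ ω‖₊ : ℝ≥0∞) ∂μ :=
      lintegral_congr fun ω => (Real.enorm_eq_ofReal (hζpos ω).le).symm
    rw [h]; exact hζint.2.ne
  -- ζ truncation
  have hζtrunc : Filter.Tendsto
      (fun n : ℕ => ∫⁻ ω, (if (n : ℝ) ≤ ζ ω then ENNReal.ofReal (ζ ω) else 0) ∂μ)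
      Filter.atTop (nhds 0) := by
    have h := MeasureTheory.tendsto_lintegral_of_dominated_convergence (μ := μ)
      (F := fun n ω => if (n : ℝ) ≤ ζ ω then ENNReal.ofReal (ζ ω) else 0)
      (f := fun _ => 0) (bound := fun ω => ENNReal.ofReal (ζ ω))
      (fun n => Measurable.ite (measurableSet_le measurable_const hζmeas)
        hζmeas.ennreal_ofReal measurable_const)
      (fun n => Filter.Eventually.of_forall fun ω => by dsimp only; split_ifs <;> simp)
      (by rw [← hLζ]; exact hLζtop)
      (Filter.Eventually.of_forall fun ω => ?_)
    · simpa using h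
    · obtain ⟨N, hN⟩ := exists_nat_gt (ζ ω)
      refine Filter.Tendsto.congr' ?_ tendsto_const_nhds
      filter_upwards [Filter.eventually_ge_atTop N] with n hn
      rw [if_neg]
      push_neg
      calc ζ ω < (N : ℝ) := hN
        _ ≤ (n : ℝ) := by exact_mod_cast hn
  -- tail integrand tendsto 0
  have key : ∀ y : ℝ, 0 ≤ y → y * Real.exp (-y) ≤ 1 := by
    intro y hy
    have h1 : y ≤ Real.exp y := by nlinarith [Real.add_one_le_exp y]
    have h2 : (0:ℝ) < Real.exp y := Real.exp_pos y
    rw [Real.exp_neg, ← div_eq_mul_inv, div_le_one h2]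
    exact h1
  have hG : Filter.Tendsto (fun n : ℕ => ∫⁻ ω,
      (ENNReal.ofReal ((n : ℝ) * Real.exp (-(n : ℝ) * Minf ω))
        + ENNReal.ofReal (Real.exp (-(n : ℝ) * Minf ω) / Minf ω)) ∂μ)
      Filter.atTop (nhds 0) := by
    have hdom : ∀ n : ℕ, (fun ω => ENNReal.ofReal ((n : ℝ) * Real.exp (-(n : ℝ) * Minf ω))
        + ENNReal.ofReal (Real.exp (-(n : ℝ) * Minf ω) / Minf ω)) ≤ᵐ[μ]
        fun ω => ENNReal.ofReal ((Minf ω)⁻¹) + ENNReal.ofReal ((Minf ω)⁻¹) := by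
      intro n
      refine Filter.Eventually.of_forall fun ω => ?_
      have hMv := hMinfpos ω
      refine add_le_add (ENNReal.ofReal_le_ofReal ?_) (ENNReal.ofReal_le_ofReal ?_)
      · have h1 : (n : ℝ) * Real.exp (-(n : ℝ) * Minf ω)
            = (Minf ω)⁻¹ * (((n : ℝ) * Minf ω) * Real.exp (-((n : ℝ) * Minf ω))) := by
          rw [neg_mul]
          field_simp
        rw [h1]
        calc (Minf ω)⁻¹ * (((n : ℝ) * Minf ω) * Real.exp (-((n : ℝ) * Minf ω)))
            ≤ (Minf ω)⁻¹ * 1 := by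
              refine mul_le_mul_of_nonneg_left (key _ ?_) (inv_nonneg.mpr hMv.le)
              positivity
          _ = (Minf ω)⁻¹ := mul_one _
      · have hle1 : Real.exp (-(n : ℝ) * Minf ω) ≤ 1 := Real.exp_le_one_iff.mpr (by nlinarith)
        calc Real.exp (-(n : ℝ) * Minf ω) / Minf ω ≤ 1 / Minf ω :=
              (div_le_div_iff_of_pos_right hMv).mpr hle1
          _ = (Minf ω)⁻¹ := one_div _
    have hfin : (∫⁻ ω, (ENNReal.ofReal ((Minf ω)⁻¹) + ENNReal.ofReal ((Minf ω)⁻¹)) ∂μ) ≠ ⊤ := by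
      rw [lintegral_add_left (f := fun ω => ENNReal.ofReal ((Minf ω)⁻¹)) hMinfmeas.inv.ennreal_ofReal]
      exact (ne_of_lt (lt_of_le_of_lt (add_le_add hFatou hFatou) (by norm_num)))
    have hlim : ∀ᵐ ω ∂μ, Filter.Tendsto (fun n : ℕ =>
        ENNReal.ofReal ((n : ℝ) * Real.exp (-(n : ℝ) * Minf ω))
          + ENNReal.ofReal (Real.exp (-(n : ℝ) * Minf ω) / Minf ω))
        Filter.atTop (nhds 0) := by
      refine Filter.Eventually.of_forall fun ω => ?_
      have hMv := hMinfpos ω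
      have hy : Filter.Tendsto (fun n : ℕ => (n : ℝ) * Minf ω) Filter.atTop Filter.atTop :=
        tendsto_natCast_atTop_atTop.atTop_mul_const hMv
      have h2 : Filter.Tendsto (fun y : ℝ => y * Real.exp (-y)) Filter.atTop (nhds 0) := by
        simpa [pow_one] using Real.tendsto_pow_mul_exp_neg_atTop_nhds_zero 1
      have t1 : Filter.Tendsto (fun n : ℕ => (n : ℝ) * Real.exp (-(n : ℝ) * Minf ω))
          Filter.atTop (nhds 0) := by
        have h3 := (h2.comp hy).const_mul (Minf ω)⁻¹
        rw [mul_zero] at h3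
        refine h3.congr fun n => ?_
        simp only [Function.comp_apply]
        rw [neg_mul]
        field_simp
      have hexp : Filter.Tendsto (fun n : ℕ => Real.exp (-(n : ℝ) * Minf ω))
          Filter.atTop (nhds 0) := by
        have h4 : Filter.Tendsto (fun n : ℕ => -(n : ℝ) * Minf ω) Filter.atTop Filter.atBot := by
          refine (Filter.tendsto_neg_atTop_atBot.comp hy).congr fun n => ?_
          simp [neg_mul]
        exact Real.tendsto_exp_atBot.comp h4
      have t2 : Filter.Tendsto (fun n : ℕ => Real.exp (-(n : ℝ) * Minf ω) / Minf ω)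
          Filter.atTop (nhds 0) := by
        simpa using hexp.div_const (Minf ω)
      have := (ENNReal.tendsto_ofReal t1).add (ENNReal.tendsto_ofReal t2)
      simpa using this
    have hFmeas : ∀ n : ℕ, Measurable (fun ω =>
        ENNReal.ofReal ((n : ℝ) * Real.exp (-(n : ℝ) * Minf ω))
          + ENNReal.ofReal (Real.exp (-(n : ℝ) * Minf ω) / Minf ω)) := by
      intro n
      refine Measurable.add (f := fun ω => ENNReal.ofReal ((n : ℝ) * Real.exp (-(n : ℝ) * Minf ω)))
        (g := fun ω => ENNReal.ofReal (Real.exp (-(n : ℝ) * Minf ω) / Minf ω)) ?_ ?_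
      · exact (measurable_const.mul ((hMinfmeas.const_mul (-(n:ℝ))).exp)).ennreal_ofReal
      · exact (((hMinfmeas.const_mul (-(n:ℝ))).exp).div hMinfmeas).ennreal_ofReal
    have h := MeasureTheory.tendsto_lintegral_of_dominated_convergence
      (bound := fun ω => ENNReal.ofReal ((Minf ω)⁻¹) + ENNReal.ofReal ((Minf ω)⁻¹))
      hFmeas hdom hfin hlim
    simpa using h
  -- independence
  have hIndepFun : ∀ k, IndepFun ζ (M k) μ := fun k =>
    (IndepFun_iff_Indep ζ (M k) μ).mpr
      (indep_of_indep_of_le_right hindep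
        (le_iSup (fun k => MeasurableSpace.comap (M k) inferInstance) k))
  refine uniformIntegrable_of le_rfl ENNReal.one_ne_top hfmeas ?_
  intro ε hε
  have hhalf : (0 : ℝ≥0∞) < ENNReal.ofReal (ε / 2) := ENNReal.ofReal_pos.mpr (half_pos hε)
  obtain ⟨A, hA⟩ := ((hζtrunc.eventually (gt_mem_nhds hhalf)).and
    (Filter.eventually_ge_atTop 1)).exists
  set ε₂ : ℝ≥0∞ := ENNReal.ofReal (ε / 2) / (Lζ + 1) with hε₂def
  have hLζ1top : Lζ + 1 ≠ ⊤ := by simp [hLζtop]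
  have hε₂pos : 0 < ε₂ := ENNReal.div_pos (ne_of_gt hhalf) hLζ1top
  have hGmul : Filter.Tendsto (fun n : ℕ => ENNReal.ofReal (Real.exp 1) *
      ∫⁻ ω, (ENNReal.ofReal ((n : ℝ) * Real.exp (-(n : ℝ) * Minf ω))
        + ENNReal.ofReal (Real.exp (-(n : ℝ) * Minf ω) / Minf ω)) ∂μ)
      Filter.atTop (nhds 0) := by
    have := ENNReal.Tendsto.const_mul (a := ENNReal.ofReal (Real.exp 1)) hG (Or.inr ENNReal.ofReal_ne_top)
    simpa using this
  obtain ⟨B, hB⟩ := ((hGmul.eventually (gt_mem_nhds hε₂pos)).and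
    (Filter.eventually_ge_atTop 1)).exists
  refine ⟨((A * B : ℕ) : ℝ≥0), fun i => ?_⟩
  have hApos : (0:ℝ) < A := by exact_mod_cast hA.2
  have hBpos : (0:ℝ) < B := by exact_mod_cast hB.2
  rw [eLpNorm_one_eq_lintegral_enorm]
  have hkey : ∀ x, (‖Set.indicator {x | ((A * B : ℕ) : ℝ≥0) ≤ ‖ζ x / M i x‖₊}
      (fun ω => ζ ω / M i ω) x‖₊ : ℝ≥0∞) ≤
      (if (A : ℝ) ≤ ζ x then ENNReal.ofReal (ζ x) else 0) * ENNReal.ofReal ((M i x)⁻¹)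
        + ENNReal.ofReal (ζ x) *
          (if (B : ℝ) < (M i x)⁻¹ then ENNReal.ofReal ((M i x)⁻¹) else 0) := by
    intro x
    by_cases hx : x ∈ {x | ((A * B : ℕ) : ℝ≥0) ≤ ‖ζ x / M i x‖₊}
    · rw [Set.indicator_of_mem hx]
      have hfx : ((A : ℝ) * B) ≤ ζ x * (M i x)⁻¹ := by
        have h2 : (((A * B : ℕ) : ℝ≥0) : ℝ) ≤ (‖ζ x / M i x‖₊ : ℝ) := NNReal.coe_le_coe.mpr hx
        rw [coe_nnnorm, Real.norm_eq_abs,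
          abs_of_nonneg (div_nonneg (hζpos x).le (hMpos i x).le)] at h2
        rw [← div_eq_mul_inv]
        calc (A:ℝ) * B = ((A*B : ℕ) : ℝ) := by push_cast; ring
          _ ≤ _ := by exact_mod_cast h2
      have hofr : (‖ζ x / M i x‖₊ : ℝ≥0∞)
          = ENNReal.ofReal (ζ x) * ENNReal.ofReal ((M i x)⁻¹) := by
        rw [show (‖ζ x / M i x‖₊ : ℝ≥0∞) = ENNReal.ofReal (ζ x / M i x) from
            Real.enorm_eq_ofReal (div_nonneg (hζpos x).le (hMpos i x).le),
          div_eq_mul_inv, ENNReal.ofReal_mul (hζpos x).le]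
      by_cases hA' : (A : ℝ) ≤ ζ x
      · rw [if_pos hA', hofr]; exact le_self_add
      · have hB' : (B : ℝ) < (M i x)⁻¹ := by
          by_contra hB'
          push_neg at hB'
          have hlt : ζ x * (M i x)⁻¹ < (A : ℝ) * B := by
            calc ζ x * (M i x)⁻¹ ≤ ζ x * B :=
                  mul_le_mul_of_nonneg_left hB' (hζpos x).le
              _ < (A:ℝ) * B := mul_lt_mul_of_pos_right (lt_of_not_ge hA') hBpos
          linarith
        rw [if_pos hB', hofr]
        exact le_add_self
    · rw [Set.indicator_of_notMem hx]; simp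
  have hφmeas : Measurable (fun x => if (A : ℝ) ≤ ζ x then ENNReal.ofReal (ζ x) else 0) :=
    Measurable.ite (measurableSet_le measurable_const hζmeas) hζmeas.ennreal_ofReal
      measurable_const
  have hfact1 : (∫⁻ x, (if (A : ℝ) ≤ ζ x then ENNReal.ofReal (ζ x) else 0)
        * ENNReal.ofReal ((M i x)⁻¹) ∂μ)
      = (∫⁻ x, (if (A : ℝ) ≤ ζ x then ENNReal.ofReal (ζ x) else 0) ∂μ)
        * ∫⁻ x, ENNReal.ofReal ((M i x)⁻¹) ∂μ := by
    have hφ : Measurable (fun r : ℝ => if (A : ℝ) ≤ r then ENNReal.ofReal r else 0) :=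
      Measurable.ite (measurableSet_le measurable_const measurable_id)
        ENNReal.measurable_ofReal measurable_const
    have hψ : Measurable (fun r : ℝ => ENNReal.ofReal r⁻¹) :=
      measurable_inv.ennreal_ofReal
    have hi := (hIndepFun i).comp hφ hψ
    have h := lintegral_mul_eq_lintegral_mul_lintegral_of_indepFun
      (hφ.comp hζmeas) (hψ.comp (hMmeas i)) hi
    simpa [Function.comp, Pi.mul_apply] using h
  have hfact2 : (∫⁻ x, ENNReal.ofReal (ζ x) *
        (if (B : ℝ) < (M i x)⁻¹ then ENNReal.ofReal ((M i x)⁻¹) else 0) ∂μ)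
      = Lζ * ∫⁻ x, (if (B : ℝ) < (M i x)⁻¹ then ENNReal.ofReal ((M i x)⁻¹) else 0) ∂μ := by
    have hφ : Measurable (fun r : ℝ => ENNReal.ofReal r) := ENNReal.measurable_ofReal
    have hψ : Measurable (fun r : ℝ => if (B : ℝ) < r⁻¹ then ENNReal.ofReal r⁻¹ else 0) :=
      Measurable.ite (measurableSet_lt measurable_const measurable_inv)
        measurable_inv.ennreal_ofReal measurable_const
    have hi := (hIndepFun i).comp hφ hψ
    have h := lintegral_mul_eq_lintegral_mul_lintegral_of_indepFun
      (hφ.comp hζmeas) (hψ.comp (hMmeas i)) hi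
    rw [hLζ]
    simpa [Function.comp, Pi.mul_apply] using h
  have hv' : (∫⁻ x, (if (B : ℝ) < (M i x)⁻¹ then ENNReal.ofReal ((M i x)⁻¹) else 0) ∂μ)
      ≤ ε₂ := by
    refine le_trans (stmt18_tail_bound (hXmeas i) hMinfmeas hMinfpos (htail i) hBpos) hB.1.le
  have hu' : (∫⁻ x, (if (A : ℝ) ≤ ζ x then ENNReal.ofReal (ζ x) else 0) ∂μ)
      ≤ ENNReal.ofReal (ε / 2) := hA.1.le
  calc (∫⁻ x, (‖Set.indicator {x | ((A * B : ℕ) : ℝ≥0) ≤ ‖ζ x / M i x‖₊}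
        (fun ω => ζ ω / M i ω) x‖₊ : ℝ≥0∞) ∂μ)
      ≤ ∫⁻ x, ((if (A : ℝ) ≤ ζ x then ENNReal.ofReal (ζ x) else 0)
          * ENNReal.ofReal ((M i x)⁻¹)
        + ENNReal.ofReal (ζ x) *
          (if (B : ℝ) < (M i x)⁻¹ then ENNReal.ofReal ((M i x)⁻¹) else 0)) ∂μ :=
        lintegral_mono hkey
    _ = (∫⁻ x, (if (A : ℝ) ≤ ζ x then ENNReal.ofReal (ζ x) else 0)
          * ENNReal.ofReal ((M i x)⁻¹) ∂μ)
        + ∫⁻ x, ENNReal.ofReal (ζ x) *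
          (if (B : ℝ) < (M i x)⁻¹ then ENNReal.ofReal ((M i x)⁻¹) else 0) ∂μ :=
        lintegral_add_left (hφmeas.mul (hXmeas i).ennreal_ofReal) _
    _ ≤ ENNReal.ofReal (ε/2) * 1 + Lζ * ε₂ := by
        rw [hfact1, hfact2, hlint1 i]
        exact add_le_add (mul_le_mul' hu' le_rfl) (mul_le_mul' le_rfl hv')
    _ ≤ ENNReal.ofReal (ε/2) + ENNReal.ofReal (ε/2) := by
        rw [mul_one]
        refine add_le_add le_rfl ?_
        calc Lζ * ε₂ ≤ (Lζ + 1) * ε₂ := mul_le_mul' le_self_add le_rfl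
          _ = ENNReal.ofReal (ε/2) := by
              rw [hε₂def]
              exact ENNReal.mul_div_cancel (by simp) hLζ1top
    _ = ENNReal.ofReal ε := by
        rw [← ENNReal.ofReal_add (by linarith) (by linarith)]
        norm_num
end
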